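/- arXiv:1407.2397 — 7 statements merged into one kernel-verified Lean document; each statement's English description precedes it below -/
import Mathlib

section
/- Let q be an odd prime power and let A = {(a₁,…,a_d, a₁²+⋯+a_d²) : a₁,…,a_d ∈ F_q} ⊆ F_q^{d+1}. Then for every nonzero x ∈ F_q^{d+1}, the number of pairs (a,a') ∈ A × A with a - a' = x is at most q^{d-1}. -/
open Finset

lemma paraboloid_key {F : Type*} [Field F] {d : ℕ} (u v : Fin d → F) (x : Fin (d + 1) → F)
    (h : Fin.snoc u (∑ i, u i ^ 2) - Fin.snoc v (∑ i, v i ^ 2) = x) :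
    (∀ i : Fin d, u i - v i = x i.castSucc) ∧
      (∑ i, u i ^ 2) - (∑ i, v i ^ 2) = x (Fin.last d) := by
  constructor
  · intro i
    have := congrFun h i.castSucc
    simpa [Pi.sub_apply] using this
  · have := congrFun h (Fin.last d)
    simpa [Pi.sub_apply] using this

theorem paraboloid_diff_bound {F : Type*} [Field F] [Fintype F] [DecidableEq F]
    {q d : ℕ} (hq : Fintype.card F = q) (hchar : ringChar F ≠ 2) (hd : 1 ≤ d)
    (A : Finset (Fin (d + 1) → F))
    (hA : A = Finset.image (fun a : Fin d → F => Fin.snoc a (∑ i, a i ^ 2)) Finset.univ)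
    (x : Fin (d + 1) → F) (hx : x ≠ 0) :
    ((A ×ˢ A).filter (fun p => p.1 - p.2 = x)).card ≤ q ^ (d - 1) := by
  subst hA
  have h2 : (2 : F) ≠ 0 := Ring.two_ne_zero hchar
  by_cases hx' : ∀ i : Fin d, x i.castSucc = 0
  · -- the filter is empty
    have hempty : ((Finset.image (fun a : Fin d → F => Fin.snoc a (∑ i, a i ^ 2)) Finset.univ ×ˢ
        Finset.image (fun a : Fin d → F => Fin.snoc a (∑ i, a i ^ 2)) Finset.univ).filter
        (fun p => p.1 - p.2 = x)) = ∅ := by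
      rw [Finset.filter_eq_empty_iff]
      rintro ⟨p1, p2⟩ hp heq
      simp only [Finset.mem_product, Finset.mem_image, Finset.mem_univ, true_and] at hp
      obtain ⟨⟨u, hu⟩, ⟨v, hv⟩⟩ := hp
      rw [← hu, ← hv] at heq
      obtain ⟨hcoord, hlast⟩ := paraboloid_key u v x heq
      have huv : u = v := by
        funext i
        have := hcoord i
        rw [hx' i] at this
        exact sub_eq_zero.mp this
      apply hx
      funext k
      refine Fin.lastCases ?_ ?_ k
      · simp only [Pi.zero_apply]
        rw [← hlast, huv, sub_self]
      · intro i
        simp only [Pi.zero_apply]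
        exact hx' i
    rw [hempty]
    simp
  · push_neg at hx'
    obtain ⟨j, hj⟩ := hx'
    set c' : F := x (Fin.last d) + ∑ i : Fin d, (x i.castSucc) ^ 2 with hc'
    -- injection into functions on {i // i ≠ j}
    have hcard : (Finset.univ : Finset ({i : Fin d // i ≠ j} → F)).card = q ^ (d - 1) := by
      rw [Finset.card_univ, Fintype.card_fun, hq]
      congr 1
      rw [Fintype.card_subtype_compl, Fintype.card_subtype_eq, Fintype.card_fin]
    rw [← hcard]
    apply Finset.card_le_card_of_injOn
      (fun p (i : {i : Fin d // i ≠ j}) => p.1 i.1.castSucc)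
      (fun p _ => Finset.mem_univ _)
    -- injectivity
    intro p hp p' hp' heq
    simp only [Finset.coe_filter, Set.mem_setOf_eq, Finset.mem_product, Finset.mem_image,
      Finset.mem_univ, true_and] at hp hp'
    obtain ⟨⟨⟨u, hu⟩, ⟨v, hv⟩⟩, hpeq⟩ := hp
    obtain ⟨⟨⟨u', hu'⟩, ⟨v', hv'⟩⟩, hpeq'⟩ := hp'
    rw [← hu, ← hv] at hpeq
    rw [← hu', ← hv'] at hpeq'
    obtain ⟨hcoord, hlast⟩ := paraboloid_key u v x hpeq
    obtain ⟨hcoord', hlast'⟩ := paraboloid_key u' v' x hpeq'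
    have hlin : ∀ (w w' : Fin d → F), (∀ i : Fin d, w i - w' i = x i.castSucc) →
        (∑ i, w i ^ 2) - (∑ i, w' i ^ 2) = x (Fin.last d) →
        ∑ i, 2 * x i.castSucc * w i = c' := by
      intro w w' hc hl
      have h1 : ∑ i, (2 * x i.castSucc * w i - (x i.castSucc) ^ 2) = x (Fin.last d) := by
        rw [← hl, ← Finset.sum_sub_distrib]
        refine Finset.sum_congr rfl fun i _ => ?_
        have : w' i = w i - x i.castSucc := by rw [← hc i]; ring
        rw [this]; ring
      rw [Finset.sum_sub_distrib] at h1
      rw [hc']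
      linear_combination h1
    have hle : ∑ i, 2 * x i.castSucc * u i = c' := hlin u v hcoord hlast
    have hle' : ∑ i, 2 * x i.castSucc * u' i = c' := hlin u' v' hcoord' hlast'
    -- u i = u' i for i ≠ j
    have hne : ∀ i : Fin d, i ≠ j → u i = u' i := by
      intro i hi
      have := congrFun heq ⟨i, hi⟩
      simp only [← hu, ← hu', Fin.snoc_castSucc] at this
      exact this
    -- split sums at j
    have hsplit : ∀ w : Fin d → F,
        ∑ i, 2 * x i.castSucc * w i
          = 2 * x j.castSucc * w j + ∑ i ∈ Finset.univ.erase j, 2 * x i.castSucc * w i := by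
      intro w
      rw [← Finset.add_sum_erase _ _ (Finset.mem_univ j)]
    have herase : ∑ i ∈ Finset.univ.erase j, 2 * x i.castSucc * u i
        = ∑ i ∈ Finset.univ.erase j, 2 * x i.castSucc * u' i := by
      refine Finset.sum_congr rfl fun i hi => ?_
      rw [hne i (Finset.ne_of_mem_erase hi)]
    have hj' : u j = u' j := by
      have h3 : 2 * x j.castSucc * u j = 2 * x j.castSucc * u' j := by
        have := hle.trans hle'.symm
        rw [hsplit u, hsplit u', herase] at this
        exact add_right_cancel this
      exact mul_left_cancel₀ (mul_ne_zero h2 hj) h3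
    have huu' : u = u' := by
      funext i
      by_cases hij : i = j
      · rw [hij]; exact hj'
      · exact hne i hij
    have hp1 : p.1 = p'.1 := by rw [← hu, ← hu', huu']
    have hp2 : p.2 = p'.2 := by
      have e1 : p.1 - p.2 = x := by rw [← hu, ← hv]; exact hpeq
      have e2 : p'.1 - p'.2 = x := by rw [← hu', ← hv']; exact hpeq'
      have := e1.trans e2.symm
      rw [hp1] at this
      exact sub_right_injective this
    exact Prod.ext hp1 hp2
end

section
/- Let q be an odd prime power, 0 < ε < 1, and P ⊆ F_q^d with |P| ≥ ε^{-1}(1−ε)^{1/2} q^{(d+1)/2}. Then (1/|P|) ∑_{p ∈ P} |Δ_p(P)| > (1−ε)q, where Δ_p(P) = {‖x−p‖ : x ∈ P} and ‖y‖ = y₁² + ⋯ + y_d². -/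
open Finset

lemma aux_hyperplane {F : Type*} [Field F] [Fintype F] [DecidableEq F] {d : ℕ}
    {a : Fin d → F} (ha : a ≠ 0) (b : F) :
    ((univ : Finset (Fin d → F)).filter (fun p => ∑ j, a j * p j = b)).card ≤
      Fintype.card F ^ (d - 1) := by
  obtain ⟨i, hai⟩ : ∃ i, a i ≠ 0 := by
    by_contra h; push_neg at h; exact ha (funext fun j => h j)
  have hinj : Set.InjOn (fun (p : Fin d → F) (j : {j : Fin d // j ≠ i}) => p j.1)
      ↑((univ : Finset (Fin d → F)).filter (fun p => ∑ j, a j * p j = b)) := by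
    intro p hp p' hp' h
    simp only [Finset.coe_filter, Set.mem_setOf_eq, Finset.mem_univ, true_and] at hp hp'
    have hne : ∀ j, j ≠ i → p j = p' j := fun j hj => congrFun h ⟨j, hj⟩
    have h1 := Finset.add_sum_erase univ (fun j => a j * p j) (Finset.mem_univ i)
    have h2 := Finset.add_sum_erase univ (fun j => a j * p' j) (Finset.mem_univ i)
    have hsum : ∑ j ∈ univ.erase i, a j * p j = ∑ j ∈ univ.erase i, a j * p' j :=
      Finset.sum_congr rfl fun j hj => by rw [hne j (Finset.mem_erase.1 hj).1]
    have hmul : a i * p i = a i * p' i := by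
      have e1 : a i * p i + ∑ j ∈ univ.erase i, a j * p j = b := h1.trans hp
      have e2 : a i * p' i + ∑ j ∈ univ.erase i, a j * p' j = b := h2.trans hp'
      rw [hsum] at e1
      exact add_right_cancel (e1.trans e2.symm)
    have hpi : p i = p' i := mul_left_cancel₀ hai hmul
    funext j
    by_cases hj : j = i
    · rw [hj]; exact hpi
    · exact hne j hj
  have hcard := Finset.card_le_card_of_injOn _ (fun x _ => Finset.mem_univ _) hinj
  refine hcard.trans_eq ?_
  rw [Finset.card_univ, Fintype.card_fun]
  congr 1
  have : Fintype.card {j : Fin d // j ≠ i} = d - 1 := by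
    simp [Fintype.card_subtype_compl, Fintype.card_subtype_eq]
  rw [this]

lemma aux_pair_count {F : Type*} [Field F] [Fintype F] [DecidableEq F] {d : ℕ}
    (hchar : ringChar F ≠ 2) {x y : Fin d → F} (hxy : x ≠ y) :
    ((univ : Finset (Fin d → F)).filter
        (fun p => ∑ i, (x i - p i) ^ 2 = ∑ i, (y i - p i) ^ 2)).card ≤
      Fintype.card F ^ (d - 1) := by
  have hiff : ∀ p : Fin d → F,
      (∑ i, (x i - p i) ^ 2 = ∑ i, (y i - p i) ^ 2) ↔
        (∑ j, (2 * (y j - x j)) * p j = ∑ j, (y j ^ 2 - x j ^ 2)) := by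
    intro p
    rw [← sub_eq_zero, ← sub_eq_zero (a := ∑ j, (2 * (y j - x j)) * p j),
      ← Finset.sum_sub_distrib, ← Finset.sum_sub_distrib]
    have hEq : ∑ i, ((x i - p i) ^ 2 - (y i - p i) ^ 2) =
        ∑ j, ((2 * (y j - x j)) * p j - (y j ^ 2 - x j ^ 2)) :=
      Finset.sum_congr rfl fun i _ => by ring
    rw [hEq]
  have hfe : ((univ : Finset (Fin d → F)).filter
      (fun p => ∑ i, (x i - p i) ^ 2 = ∑ i, (y i - p i) ^ 2)) =
      ((univ : Finset (Fin d → F)).filter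
      (fun p => ∑ j, (2 * (y j - x j)) * p j = ∑ j, (y j ^ 2 - x j ^ 2))) :=
    Finset.filter_congr fun p _ => by rw [hiff p]
  rw [hfe]
  apply aux_hyperplane
  intro hz
  obtain ⟨j, hj⟩ : ∃ j, x j ≠ y j := by
    by_contra hc; push_neg at hc; exact hxy (funext hc)
  have := congrFun hz j
  simp only [Pi.zero_apply] at this
  exact (mul_ne_zero (Ring.two_ne_zero hchar) (sub_ne_zero_of_ne (Ne.symm hj))) this

lemma aux_S_alt {F : Type*} [Field F] [Fintype F] [DecidableEq F] {d : ℕ}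
    (P : Finset (Fin d → F)) (p : Fin d → F) :
    ∑ t : F, ((P.filter (fun x => ∑ i, (x i - p i) ^ 2 = t)).card) ^ 2 =
      ∑ x ∈ P, (P.filter (fun y => ∑ i, (y i - p i) ^ 2 = ∑ i, (x i - p i) ^ 2)).card := by
  have h := Finset.sum_fiberwise_eq_sum_filter P univ (fun x => ∑ i, (x i - p i) ^ 2)
      (fun x => (P.filter (fun y => ∑ i, (y i - p i) ^ 2 = ∑ i, (x i - p i) ^ 2)).card)
  rw [Finset.filter_true_of_mem (fun x _ => Finset.mem_univ _)] at h
  rw [← h]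
  refine Finset.sum_congr rfl fun t _ => ?_
  have hinner : ∀ x ∈ P.filter (fun x => ∑ i, (x i - p i) ^ 2 = t),
      (P.filter (fun y => ∑ i, (y i - p i) ^ 2 = ∑ i, (x i - p i) ^ 2)).card =
        (P.filter (fun x => ∑ i, (x i - p i) ^ 2 = t)).card := by
    intro x hx
    rw [(Finset.mem_filter.1 hx).2]
  rw [Finset.sum_congr rfl hinner, Finset.sum_const, smul_eq_mul, sq]

lemma aux_L_bound {F : Type*} [Field F] [Fintype F] [DecidableEq F] {d : ℕ}
    (hchar : ringChar F ≠ 2) (P : Finset (Fin d → F)) :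
    ∑ p : Fin d → F, ∑ x ∈ P,
        (P.filter (fun y => ∑ i, (y i - p i) ^ 2 = ∑ i, (x i - p i) ^ 2)).card ≤
      P.card * Fintype.card F ^ d + P.card * (P.card - 1) * Fintype.card F ^ (d - 1) := by
  rw [Finset.sum_comm]
  have hswap : ∀ x ∈ P, ∑ p : Fin d → F,
      (P.filter (fun y => ∑ i, (y i - p i) ^ 2 = ∑ i, (x i - p i) ^ 2)).card =
      ∑ y ∈ P, ((univ : Finset (Fin d → F)).filter
        (fun p => ∑ i, (y i - p i) ^ 2 = ∑ i, (x i - p i) ^ 2)).card := by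
    intro x _
    simp only [Finset.card_filter]
    rw [Finset.sum_comm]
  rw [Finset.sum_congr rfl hswap]
  have hbound : ∀ x ∈ P, ∑ y ∈ P, ((univ : Finset (Fin d → F)).filter
      (fun p => ∑ i, (y i - p i) ^ 2 = ∑ i, (x i - p i) ^ 2)).card ≤
      Fintype.card F ^ d + (P.card - 1) * Fintype.card F ^ (d - 1) := by
    intro x hx
    rw [← Finset.add_sum_erase _ _ hx]
    gcongr
    · apply Finset.card_le_card (Finset.filter_subset _ _) |>.trans
      rw [Finset.card_univ, Fintype.card_fun, Fintype.card_fin]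
    · calc ∑ y ∈ P.erase x, ((univ : Finset (Fin d → F)).filter
          (fun p => ∑ i, (y i - p i) ^ 2 = ∑ i, (x i - p i) ^ 2)).card
          ≤ ∑ _y ∈ P.erase x, Fintype.card F ^ (d - 1) := by
            refine Finset.sum_le_sum fun y hy => ?_
            exact aux_pair_count hchar (Finset.mem_erase.1 hy).1
        _ = (P.card - 1) * Fintype.card F ^ (d - 1) := by
            rw [Finset.sum_const, smul_eq_mul, Finset.card_erase_of_mem hx]
  calc ∑ x ∈ P, ∑ y ∈ P, ((univ : Finset (Fin d → F)).filter
      (fun p => ∑ i, (y i - p i) ^ 2 = ∑ i, (x i - p i) ^ 2)).card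
      ≤ ∑ _x ∈ P, (Fintype.card F ^ d + (P.card - 1) * Fintype.card F ^ (d - 1)) :=
        Finset.sum_le_sum hbound
    _ = P.card * Fintype.card F ^ d + P.card * (P.card - 1) * Fintype.card F ^ (d - 1) := by
        rw [Finset.sum_const, smul_eq_mul, mul_add, mul_assoc]
set_option maxHeartbeats 1000000 in
theorem pinned_distances_average {F : Type*} [Field F] [Fintype F] [DecidableEq F]
    {q d : ℕ} (hq : Fintype.card F = q) (hchar : ringChar F ≠ 2) (hd : 1 ≤ d)
    (ε : ℝ) (hε0 : 0 < ε) (hε1 : ε < 1)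
    (P : Finset (Fin d → F))
    (hP : (P.card : ℝ) ≥ ε⁻¹ * Real.sqrt (1 - ε) * Real.sqrt ((q : ℝ) ^ (d + 1))) :
    (1 / (P.card : ℝ)) * ∑ p ∈ P, ((P.image (fun x => ∑ i, (x i - p i) ^ 2)).card : ℝ) >
      (1 - ε) * q := by
  have hq0 : 0 < q := hq ▸ Fintype.card_pos
  have hQ0 : (0:ℝ) < (q:ℝ) := by exact_mod_cast hq0
  have h1e : (0:ℝ) < 1 - ε := by linarith
  have hA0 : (0:ℝ) < ε⁻¹ * Real.sqrt (1 - ε) * Real.sqrt ((q:ℝ) ^ (d+1)) :=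
    mul_pos (mul_pos (inv_pos.2 hε0) (Real.sqrt_pos.2 h1e))
      (Real.sqrt_pos.2 (by positivity))
  have hn0 : (0:ℝ) < (P.card : ℝ) := lt_of_lt_of_le hA0 hP
  have hPcard : 1 ≤ P.card := by exact_mod_cast Nat.one_le_iff_ne_zero.2 (by
    intro h; rw [h] at hn0; simp at hn0)
  set n : ℝ := (P.card : ℝ) with hn
  set Q : ℝ := (q : ℝ) with hQdef
  set m : (Fin d → F) → F → ℕ :=
    fun p t => (P.filter (fun x => ∑ i, (x i - p i) ^ 2 = t)).card with hm
  set Sr : (Fin d → F) → ℝ := fun p => ∑ t : F, ((m p t : ℝ)) ^ 2 with hSr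
  have hm_sum : ∀ p, ∑ t : F, m p t = P.card := fun p =>
    (Finset.card_eq_sum_card_fiberwise (fun x _ => Finset.mem_univ _)).symm
  have hcardF : (Finset.univ : Finset F).card = q := by rw [Finset.card_univ, hq]
  -- variance identity
  have hvar : ∀ p, Sr p = (∑ t : F, ((m p t : ℝ) - n/Q) ^ 2) + n^2/Q := by
    intro p
    have h1 : (∑ t : F, (m p t : ℝ)) = n := by
      rw [hn, ← hm_sum p]; push_cast; rfl
    have hexp : ∑ t : F, ((m p t : ℝ) - n/Q) ^ 2
        = ∑ t : F, ((m p t:ℝ)^2 - 2*(n/Q)*(m p t:ℝ) + (n/Q)^2) :=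
      Finset.sum_congr rfl fun t _ => by ring
    rw [hexp, Finset.sum_add_distrib, Finset.sum_sub_distrib, ← Finset.mul_sum, h1,
      Finset.sum_const, hcardF, nsmul_eq_mul, hSr]
    field_simp
    ring
  have hvar_nonneg : ∀ p, (0:ℝ) ≤ ∑ t : F, ((m p t : ℝ) - n/Q) ^ 2 :=
    fun p => Finset.sum_nonneg fun t _ => sq_nonneg _
  have hSge : ∀ p, n^2/Q ≤ Sr p := fun p => by
    rw [hvar p]; linarith [hvar_nonneg p]
  set T : ℝ := ∑ p ∈ P, Sr p with hT
  have hTpos : 0 < T := by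
    have h1 : ∑ p ∈ P, n^2/Q ≤ T := Finset.sum_le_sum (fun p _ => hSge p)
    rw [Finset.sum_const, nsmul_eq_mul] at h1
    have h2 : (0:ℝ) < n * (n^2/Q) := by positivity
    rw [← hn] at h1
    linarith
  -- upper bound on T
  have hTub : T ≤ n^3/Q + n * Q^d := by
    have hsplit : T = (∑ p ∈ P, ∑ t : F, ((m p t : ℝ) - n/Q)^2) + n * (n^2/Q) := by
      rw [hT, Finset.sum_congr rfl (fun p _ => hvar p), Finset.sum_add_distrib,
        Finset.sum_const, nsmul_eq_mul, ← hn]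
    have hVsub : (∑ p ∈ P, ∑ t : F, ((m p t:ℝ) - n/Q)^2)
        ≤ ∑ p : Fin d → F, ∑ t : F, ((m p t:ℝ) - n/Q)^2 :=
      Finset.sum_le_sum_of_subset_of_nonneg (Finset.subset_univ P)
        (fun p _ _ => hvar_nonneg p)
    have hVuniv : ∑ p : Fin d → F, ∑ t : F, ((m p t:ℝ) - n/Q)^2
        = (∑ p : Fin d → F, Sr p) - Q^d * (n^2/Q) := by
      have e : ∀ p : Fin d → F, ∑ t : F, ((m p t:ℝ) - n/Q)^2 = Sr p - n^2/Q :=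
        fun p => by rw [hvar p]; ring
      rw [Finset.sum_congr rfl (fun p _ => e p), Finset.sum_sub_distrib,
        Finset.sum_const, Finset.card_univ, Fintype.card_fun, Fintype.card_fin,
        hq, nsmul_eq_mul, hQdef]
      push_cast
      ring
    have hLnat : ∑ p : Fin d → F, ∑ t : F, (m p t)^2
        ≤ P.card * q ^ d + P.card * (P.card - 1) * q ^ (d - 1) := by
      have h1 := aux_L_bound hchar P
      rw [hq] at h1
      calc ∑ p : Fin d → F, ∑ t : F, (m p t)^2
          = ∑ p : Fin d → F, ∑ x ∈ P, (P.filter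
              (fun y => ∑ i, (y i - p i) ^ 2 = ∑ i, (x i - p i) ^ 2)).card :=
            Finset.sum_congr rfl fun p _ => aux_S_alt P p
        _ ≤ _ := h1
    have hLreal : (∑ p : Fin d → F, Sr p) ≤ n * Q^d + n*(n-1)*Q^(d-1) := by
      have h2 : ((∑ p : Fin d → F, ∑ t : F, (m p t)^2 : ℕ) : ℝ)
          ≤ ((P.card * q ^ d + P.card * (P.card - 1) * q ^ (d - 1) : ℕ) : ℝ) :=
        Nat.cast_le.2 hLnat
      push_cast [Nat.cast_sub hPcard] at h2
      convert h2 using 2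
    have hQd : Q^d = Q * Q^(d-1) := by
      conv_lhs => rw [show d = (d-1)+1 from (Nat.succ_pred_eq_of_pos hd).symm]
      rw [pow_succ']
    have e1 : Q^d * (n^2/Q) = n^2 * Q^(d-1) := by
      rw [hQd]; field_simp
    have hVub : (∑ p ∈ P, ∑ t : F, ((m p t:ℝ) - n/Q)^2) ≤ n * Q^d := by
      have h3 : (0:ℝ) ≤ n * Q^(d-1) := by positivity
      calc (∑ p ∈ P, ∑ t : F, ((m p t:ℝ) - n/Q)^2)
          ≤ (∑ p : Fin d → F, Sr p) - Q^d * (n^2/Q) := by rw [← hVuniv]; exact hVsub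
        _ ≤ n * Q^d + n*(n-1)*Q^(d-1) - n^2 * Q^(d-1) := by rw [e1]; linarith [hLreal]
        _ = n * Q^d - n * Q^(d-1) := by ring
        _ ≤ n * Q^d := by linarith
    have e2 : n * (n^2/Q) = n^3/Q := by ring
    linarith [hsplit, hVub]
  -- Cauchy-Schwarz part
  set Dsum : ℝ := ∑ p ∈ P, ((P.image (fun x => ∑ i, (x i - p i) ^ 2)).card : ℝ)
    with hDsum
  have hSr_nonneg : ∀ p, (0:ℝ) ≤ Sr p := fun p => Finset.sum_nonneg fun t _ => sq_nonneg _
  have hCSp : ∀ p, n^2 ≤ ((P.image (fun x => ∑ i, (x i - p i) ^ 2)).card : ℝ) * Sr p := by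
    intro p
    have hfib : P.card = ∑ s ∈ P.image (fun x => ∑ i, (x i - p i)^2), m p s :=
      Finset.card_eq_sum_card_fiberwise (fun x hx => Finset.mem_image_of_mem _ hx)
    have h1 : n = ∑ s ∈ P.image (fun x => ∑ i, (x i - p i)^2), (m p s : ℝ) := by
      rw [hn, hfib]; push_cast; rfl
    have h2 := sq_sum_le_card_mul_sum_sq
      (s := P.image (fun x => ∑ i, (x i - p i)^2)) (f := fun s => (m p s : ℝ))
    have h3 : ∑ s ∈ P.image (fun x => ∑ i, (x i - p i)^2), (m p s:ℝ)^2 ≤ Sr p :=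
      Finset.sum_le_sum_of_subset_of_nonneg (Finset.subset_univ _)
        (fun t _ _ => sq_nonneg _)
    have h4 : ((P.image (fun x => ∑ i, (x i - p i)^2)).card : ℝ)
        * (∑ s ∈ P.image (fun x => ∑ i, (x i - p i)^2), (m p s:ℝ)^2)
        ≤ ((P.image (fun x => ∑ i, (x i - p i)^2)).card : ℝ) * Sr p := by
      apply mul_le_mul_of_nonneg_left h3 (by positivity)
    calc n^2 = (∑ s ∈ P.image (fun x => ∑ i, (x i - p i)^2), (m p s : ℝ))^2 := by rw [h1]
      _ ≤ _ := h2
      _ ≤ _ := h4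
  have hs1 : ∀ p ∈ P, n ≤ Real.sqrt ((P.image (fun x => ∑ i, (x i - p i) ^ 2)).card : ℝ)
      * Real.sqrt (Sr p) := by
    intro p _
    calc n = Real.sqrt (n^2) := (Real.sqrt_sq hn0.le).symm
      _ ≤ Real.sqrt (((P.image (fun x => ∑ i, (x i - p i) ^ 2)).card : ℝ) * Sr p) :=
        Real.sqrt_le_sqrt (hCSp p)
      _ = _ := Real.sqrt_mul (by positivity) _
  have hs2 : n * n ≤ ∑ p ∈ P,
      Real.sqrt ((P.image (fun x => ∑ i, (x i - p i) ^ 2)).card : ℝ) * Real.sqrt (Sr p) := by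
    calc n * n = ∑ _p ∈ P, n := by rw [Finset.sum_const, nsmul_eq_mul, hn]
      _ ≤ _ := Finset.sum_le_sum hs1
  have hs3 := sum_mul_sq_le_sq_mul_sq P
    (fun p => Real.sqrt ((P.image (fun x => ∑ i, (x i - p i) ^ 2)).card : ℝ))
    (fun p => Real.sqrt (Sr p))
  have hs4 : (∑ p ∈ P, Real.sqrt ((P.image (fun x => ∑ i, (x i - p i) ^ 2)).card : ℝ)
      * Real.sqrt (Sr p))^2 ≤ Dsum * T := by
    have e1 : ∑ p ∈ P, (Real.sqrt ((P.image (fun x => ∑ i, (x i - p i) ^ 2)).card : ℝ))^2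
        = Dsum :=
      Finset.sum_congr rfl fun p _ => Real.sq_sqrt (Nat.cast_nonneg _)
    have e2 : ∑ p ∈ P, (Real.sqrt (Sr p))^2 = T :=
      Finset.sum_congr rfl fun p _ => Real.sq_sqrt (hSr_nonneg p)
    exact hs3.trans (le_of_eq (by rw [e1, e2]))
  have hn4 : n^4 ≤ Dsum * T := by
    have h5 : (n*n)^2 ≤ (∑ p ∈ P,
        Real.sqrt ((P.image (fun x => ∑ i, (x i - p i) ^ 2)).card : ℝ)
        * Real.sqrt (Sr p))^2 := by
      apply pow_le_pow_left₀ (by positivity) hs2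
    calc n^4 = (n*n)^2 := by ring
      _ ≤ _ := h5
      _ ≤ _ := hs4
  -- final arithmetic
  have hkey : (1-ε) * Q^(d+1) < ε * n^2 := by
    have hA2 : (ε⁻¹ * Real.sqrt (1-ε) * Real.sqrt (Q^(d+1)))^2
        = ε⁻¹^2 * ((1-ε) * Q^(d+1)) := by
      rw [mul_pow, mul_pow, Real.sq_sqrt h1e.le, Real.sq_sqrt (by positivity)]
      ring
    have hn2 : ε⁻¹^2 * ((1-ε) * Q^(d+1)) ≤ n^2 := by
      rw [← hA2]; exact pow_le_pow_left₀ hA0.le hP 2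
    have hεinv : 1 < ε⁻¹ := (one_lt_inv₀ hε0).2 hε1
    have e : ε * (ε⁻¹^2 * ((1-ε) * Q^(d+1))) = ε⁻¹ * ((1-ε) * Q^(d+1)) := by
      field_simp
    have h5 : ε⁻¹ * ((1-ε)*Q^(d+1)) ≤ ε * n^2 := by
      rw [← e]; exact mul_le_mul_of_nonneg_left hn2 hε0.le
    have h6 : (1-ε)*Q^(d+1) < ε⁻¹ * ((1-ε)*Q^(d+1)) := by
      nlinarith [mul_pos h1e (pow_pos hQ0 (d+1)), hεinv]
    linarith
  have hgoal : (1-ε)*Q*n < Dsum := by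
    have hQ' : Q^(d+1) = Q * Q^d := pow_succ' Q d
    have hTmul : (1-ε)*Q*n*T < n^4 := by
      have hle : (1-ε)*Q*n*T ≤ (1-ε)*Q*n*(n^3/Q + n*Q^d) :=
        mul_le_mul_of_nonneg_left hTub (by positivity)
      have heq : (1-ε)*Q*n*(n^3/Q + n*Q^d) = (1-ε)*n^4 + (1-ε)*Q^(d+1)*n^2 := by
        rw [hQ']; field_simp
      have hmul := mul_lt_mul_of_pos_right hkey (by positivity : (0:ℝ) < n^2)
      nlinarith [hle, heq, hmul]
    have h7 : (1-ε)*Q*n*T < Dsum * T := lt_of_lt_of_le hTmul hn4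
    exact lt_of_mul_lt_mul_right h7 hTpos.le
  rw [gt_iff_lt, one_div, inv_mul_eq_div, lt_div_iff₀ hn0]
  calc (1-ε) * Q * n < Dsum := hgoal
end

section
/- Let q be an odd prime power, 0 < α < 1, and P ⊆ F_q^d with |P| ≥ α^{-2}(1−α²)^{1/2} q^{(d+1)/2}. Then the set of points p ∈ P with |Δ_p(P)| > (1−α)q has size at least (1−α)|P|. -/
open Finset

private lemma fiber_card_mul_le {F : Type*} [Field F] [Fintype F] [DecidableEq F]
    {d : ℕ} (hd : 1 ≤ d) (hchar : ringChar F ≠ 2) {x y : Fin d → F} (hxy : x ≠ y) :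
    ((univ.filter (fun p : Fin d → F =>
      ∑ i, (x i - p i) ^ 2 = ∑ i, (y i - p i) ^ 2)).card) * Fintype.card F
      ≤ Fintype.card F ^ d := by
  obtain ⟨i₀, hi₀⟩ := Function.ne_iff.mp hxy
  have h2 : (2 : F) ≠ 0 := Ring.two_ne_zero hchar
  have hcard : ((univ.filter (fun p : Fin d → F =>
      ∑ i, (x i - p i) ^ 2 = ∑ i, (y i - p i) ^ 2)).card)
      ≤ Fintype.card F ^ (d - 1) := by
    have := Finset.card_le_card_of_injOn
      (f := fun (p : Fin d → F) (j : {i : Fin d // i ≠ i₀}) => p j.1)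
      (s := univ.filter (fun p : Fin d → F =>
        ∑ i, (x i - p i) ^ 2 = ∑ i, (y i - p i) ^ 2))
      (t := (univ : Finset ({i : Fin d // i ≠ i₀} → F)))
      (fun p _ => mem_univ _) ?_
    · refine this.trans_eq ?_
      rw [card_univ, Fintype.card_fun]
      congr 1
      rw [Fintype.card_subtype_compl]
      simp
    · intro p hp p' hp' hpp'
      simp only [coe_filter, Set.mem_setOf_eq, mem_univ, true_and] at hp hp'
      have hagree : ∀ i : Fin d, i ≠ i₀ → p i = p' i := by
        intro i hi
        exact congrFun hpp' ⟨i, hi⟩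
      have key : ∑ i, ((x i - p i) ^ 2 - (y i - p i) ^ 2
          - (x i - p' i) ^ 2 + (y i - p' i) ^ 2) = 0 := by
        rw [show (0:F) = (∑ i, (x i - p i) ^ 2 - ∑ i, (y i - p i) ^ 2)
          - (∑ i, (x i - p' i) ^ 2 - ∑ i, (y i - p' i) ^ 2) by
            rw [hp, hp']; ring]
        simp [Finset.sum_sub_distrib, Finset.sum_add_distrib]
        abel
      have hsingle : (x i₀ - p i₀) ^ 2 - (y i₀ - p i₀) ^ 2
          - (x i₀ - p' i₀) ^ 2 + (y i₀ - p' i₀) ^ 2 = 0 := by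
        rw [← key]
        refine (Finset.sum_eq_single (f := fun i => (x i - p i) ^ 2 - (y i - p i) ^ 2
            - (x i - p' i) ^ 2 + (y i - p' i) ^ 2) i₀
          (fun b _ hb => by rw [hagree b hb]; ring)
          (fun h => absurd (mem_univ i₀) h)).symm
      have : (p' i₀ - p i₀) * (2 * (x i₀ - y i₀)) = 0 := by linear_combination hsingle
      rcases mul_eq_zero.mp this with h | h
      · have hpi : p i₀ = p' i₀ := by linear_combination -h
        funext i
        by_cases hii : i = i₀
        · rw [hii]; exact hpi
        · exact hagree i hii
      · rcases mul_eq_zero.mp h with h' | h'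
        · exact absurd h' h2
        · exact absurd (sub_eq_zero.mp h') hi₀
  calc _ ≤ Fintype.card F ^ (d-1) * Fintype.card F :=
        Nat.mul_le_mul_right _ hcard
    _ = Fintype.card F ^ d := by
        rw [← pow_succ, Nat.sub_add_cancel hd]

set_option maxHeartbeats 1000000 in
theorem many_pins_many_distances {F : Type*} [Field F] [Fintype F] [DecidableEq F]
    {q d : ℕ} (hq : Fintype.card F = q) (hchar : ringChar F ≠ 2) (hd : 1 ≤ d)
    (α : ℝ) (hα0 : 0 < α) (hα1 : α < 1)
    (P : Finset (Fin d → F))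
    (hP : (P.card : ℝ) ≥ (α ^ 2)⁻¹ * Real.sqrt (1 - α ^ 2) * Real.sqrt ((q : ℝ) ^ (d + 1))) :
    ((P.filter (fun p =>
        ((P.image (fun x => ∑ i, (x i - p i) ^ 2)).card : ℝ) > (1 - α) * q)).card : ℝ) ≥
      (1 - α) * P.card := by
  classical
  have hq1 : 1 ≤ q := hq ▸ Fintype.card_pos
  have hq0 : (0:ℝ) < q := by exact_mod_cast hq1
  have hα1' : (0:ℝ) < 1 - α := by linarith
  set n : ℝ := (P.card : ℝ) with hn
  -- P is nonempty
  have hP1 : 0 < n := by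
    have h1 : (0:ℝ) < (α ^ 2)⁻¹ * Real.sqrt (1 - α ^ 2) * Real.sqrt ((q : ℝ) ^ (d + 1)) := by
      have : (0:ℝ) < 1 - α ^ 2 := by nlinarith
      positivity
    linarith [hP]
  -- key consequence of hP
  have hkey : (1 - α) * (q:ℝ) ^ (d+1) ≤ α ^ 2 * n ^ 2 := by
    have h1 : (0:ℝ) ≤ 1 - α ^ 2 := by nlinarith
    have h2 : (0:ℝ) ≤ (q:ℝ) ^ (d+1) := by positivity
    have hs1 := Real.sq_sqrt h1
    have hs2 := Real.sq_sqrt h2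
    have hK : (0:ℝ) ≤ (α ^ 2)⁻¹ * Real.sqrt (1 - α ^ 2) := by positivity
    have hsq : ((α ^ 2)⁻¹ * Real.sqrt (1 - α ^ 2) * Real.sqrt ((q : ℝ) ^ (d + 1))) ^ 2 ≤ n ^ 2 := by
      have h0 : (0:ℝ) ≤ (α ^ 2)⁻¹ * Real.sqrt (1 - α ^ 2) * Real.sqrt ((q : ℝ) ^ (d + 1)) := by
        positivity
      nlinarith [hP]
    have hexp : ((α ^ 2)⁻¹ * Real.sqrt (1 - α ^ 2) * Real.sqrt ((q : ℝ) ^ (d + 1))) ^ 2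
        = (α ^ 2)⁻¹ ^ 2 * (1 - α ^ 2) * ((q:ℝ) ^ (d+1)) := by
      rw [mul_pow, mul_pow, hs1, hs2]
    rw [hexp] at hsq
    have hαinv : (α ^ 2)⁻¹ ^ 2 = (α ^ 4)⁻¹ := by
      rw [inv_pow, ← pow_mul]
    rw [hαinv] at hsq
    have hα4 : (0:ℝ) < α ^ 4 := by positivity
    rw [mul_assoc, inv_mul_le_iff₀ hα4] at hsq
    have hcancel : α ^ 2 * ((1 - α) * (q:ℝ) ^ (d+1)) ≤ α ^ 2 * (α ^ 2 * n ^ 2) := by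
      nlinarith [hsq, mul_nonneg (mul_nonneg h2 hα1'.le) hα1'.le,
        mul_nonneg h2 hα1'.le, mul_nonneg (mul_nonneg h2 hα1'.le) hα0.le,
        mul_nonneg (mul_nonneg (mul_nonneg h2 hα1'.le) hα1'.le) hα0.le]
    exact le_of_mul_le_mul_left hcancel (by positivity)
  -- multiplicity function and second moment
  set r : (Fin d → F) → F → ℕ :=
    fun p t => (P.filter (fun x => (∑ i, (x i - p i) ^ 2) = t)).card with hr
  set S : (Fin d → F) → ℕ := fun p => ∑ t : F, (r p t) ^ 2 with hS
  have hrsum : ∀ p : Fin d → F, ∑ t : F, r p t = P.card := by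
    intro p
    exact (Finset.card_eq_sum_card_fiberwise (fun x _ => mem_univ _)).symm
  have hSpair : ∀ p : Fin d → F, S p = ∑ x ∈ P, ∑ y ∈ P,
      if (∑ i, (y i - p i) ^ 2) = (∑ i, (x i - p i) ^ 2) then 1 else 0 := by
    intro p
    have hexp : ∀ t : F, r p t ^ 2 = ∑ x ∈ P, ∑ y ∈ P,
        (if (∑ i, (x i - p i) ^ 2) = t then 1 else 0) *
        (if (∑ i, (y i - p i) ^ 2) = t then 1 else 0) := by
      intro t
      rw [sq, hr]
      simp only
      rw [Finset.card_filter, Finset.sum_mul_sum]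
    rw [hS]
    simp only [hexp]
    rw [Finset.sum_comm]
    refine Finset.sum_congr rfl fun x hx => ?_
    rw [Finset.sum_comm]
    refine Finset.sum_congr rfl fun y hy => ?_
    have hite : ∀ t : F, (if (∑ i, (x i - p i) ^ 2) = t then (1:ℕ) else 0) *
        (if (∑ i, (y i - p i) ^ 2) = t then 1 else 0)
        = if (∑ i, (x i - p i) ^ 2) = t then
            (if (∑ i, (y i - p i) ^ 2) = t then 1 else 0) else 0 := by
      intro t; split <;> simp
    simp only [hite, Finset.sum_ite_eq, mem_univ, if_true]
  -- counting over all pins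
  have hcount : ∀ x ∈ P, ∀ y ∈ P,
      (univ.filter (fun p : Fin d → F =>
        ∑ i, (y i - p i) ^ 2 = ∑ i, (x i - p i) ^ 2)).card * q ≤
      if x = y then q ^ (d + 1) else q ^ d := by
    intro x _ y _
    split
    · calc _ ≤ (univ : Finset (Fin d → F)).card * q :=
          Nat.mul_le_mul_right _ (Finset.card_filter_le _ _)
        _ = q ^ (d + 1) := by
          rw [card_univ, Fintype.card_fun, hq, Fintype.card_fin, pow_succ]
    · next h => simpa [hq] using fiber_card_mul_le hd hchar (Ne.symm h)
  have htotal : (∑ p : Fin d → F, S p) * q ≤ P.card * q ^ (d + 1) + P.card ^ 2 * q ^ d := by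
    have hswap : ∑ p : Fin d → F, S p = ∑ x ∈ P, ∑ y ∈ P,
        (univ.filter (fun p : Fin d → F =>
          ∑ i, (y i - p i) ^ 2 = ∑ i, (x i - p i) ^ 2)).card := by
      simp only [hSpair]
      rw [Finset.sum_comm]
      refine Finset.sum_congr rfl fun x hx => ?_
      rw [Finset.sum_comm]
      refine Finset.sum_congr rfl fun y hy => ?_
      rw [Finset.card_filter]
    rw [hswap, Finset.sum_mul]
    calc ∑ x ∈ P, (∑ y ∈ P, (univ.filter (fun p : Fin d → F =>
            ∑ i, (y i - p i) ^ 2 = ∑ i, (x i - p i) ^ 2)).card) * q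
        = ∑ x ∈ P, ∑ y ∈ P, (univ.filter (fun p : Fin d → F =>
            ∑ i, (y i - p i) ^ 2 = ∑ i, (x i - p i) ^ 2)).card * q := by
          simp only [Finset.sum_mul]
      _ ≤ ∑ x ∈ P, ∑ y ∈ P, (if x = y then q ^ (d + 1) else q ^ d) :=
          Finset.sum_le_sum fun x hx => Finset.sum_le_sum fun y hy => hcount x hx y hy
      _ ≤ ∑ x ∈ P, (q ^ (d + 1) + P.card * q ^ d) := by
          refine Finset.sum_le_sum fun x hx => ?_
          calc ∑ y ∈ P, (if x = y then q ^ (d + 1) else q ^ d)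
              ≤ ∑ y ∈ P, ((if x = y then q ^ (d + 1) else 0) + q ^ d) :=
                Finset.sum_le_sum fun y _ => by split <;> simp
            _ = (∑ y ∈ P, if x = y then q ^ (d + 1) else 0) + P.card * q ^ d := by
                rw [Finset.sum_add_distrib, Finset.sum_const, smul_eq_mul]
            _ ≤ q ^ (d + 1) + P.card * q ^ d := by
                have : (∑ y ∈ P, if x = y then q ^ (d + 1) else 0) ≤ q ^ (d + 1) := by
                  rw [Finset.sum_ite_eq]
                  split <;> simp
                exact Nat.add_le_add_right this _
      _ = P.card * q ^ (d + 1) + P.card ^ 2 * q ^ d := by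
          rw [Finset.sum_const, smul_eq_mul]; ring
  -- variance
  set V : (Fin d → F) → ℝ := fun p => ∑ t : F, ((r p t : ℝ) - n / q) ^ 2 with hV
  have hV0 : ∀ p, 0 ≤ V p := fun p => Finset.sum_nonneg fun t _ => sq_nonneg _
  have hcardF : (univ : Finset F).card = q := by rw [card_univ, hq]
  have hVid : ∀ p, V p = (S p : ℝ) - n ^ 2 / q := by
    intro p
    have hrn : ∑ t : F, (r p t : ℝ) = n := by
      rw [hn, ← hrsum p]; push_cast; rfl
    have hSn : (S p : ℝ) = ∑ t : F, (r p t : ℝ) ^ 2 := by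
      rw [hS]; push_cast; rfl
    have hexp : V p = (∑ t : F, (r p t : ℝ) ^ 2) - 2 * (n / q) * (∑ t : F, (r p t : ℝ))
        + (univ : Finset F).card * (n / q) ^ 2 := by
      rw [hV]
      simp only
      calc (∑ t : F, ((r p t : ℝ) - n / q) ^ 2)
          = ∑ t : F, ((r p t : ℝ) ^ 2 - 2 * (n / q) * (r p t : ℝ) + (n / q) ^ 2) :=
            Finset.sum_congr rfl fun t _ => by ring
        _ = _ := by
            rw [Finset.sum_add_distrib, Finset.sum_sub_distrib, ← Finset.mul_sum,
              Finset.sum_const, nsmul_eq_mul]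
    rw [hexp, hrn, hcardF, ← hSn]
    field_simp
    ring
  -- Cauchy-Schwarz
  have hCS : ∀ p ∈ P, n ^ 2 ≤
      ((P.image (fun x => ∑ i, (x i - p i) ^ 2)).card : ℝ) * (S p : ℝ) := by
    intro p hp
    have h0 : ∑ t ∈ P.image (fun x => ∑ i, (x i - p i) ^ 2), r p t = P.card := by
      simp only [hr]
      exact (Finset.card_eq_sum_card_image (fun x : Fin d → F => ∑ i, (x i - p i) ^ 2) P).symm
    have h1 : ∑ t ∈ P.image (fun x => ∑ i, (x i - p i) ^ 2), (r p t : ℝ) = n := by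
      rw [hn, ← h0]
      push_cast
      rfl
    have h2 : (∑ t ∈ P.image (fun x => ∑ i, (x i - p i) ^ 2), (r p t : ℝ) * 1) ^ 2 ≤
        (∑ t ∈ P.image (fun x => ∑ i, (x i - p i) ^ 2), (r p t : ℝ) ^ 2) *
        (∑ t ∈ P.image (fun x => ∑ i, (x i - p i) ^ 2), (1:ℝ) ^ 2) :=
      Finset.sum_mul_sq_le_sq_mul_sq _ _ _
    simp only [mul_one, one_pow, Finset.sum_const, nsmul_eq_mul] at h2
    rw [h1] at h2
    have h3 : (∑ t ∈ P.image (fun x => ∑ i, (x i - p i) ^ 2), (r p t : ℝ) ^ 2) ≤ (S p : ℝ) := by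
      rw [hS]
      push_cast
      exact Finset.sum_le_sum_of_subset_of_nonneg (Finset.subset_univ _)
        (fun t _ _ => by positivity)
    refine h2.trans ?_
    rw [mul_comm]
    exact mul_le_mul_of_nonneg_left h3 (Nat.cast_nonneg _)
  -- bad pins have large variance
  have hbad : ∀ p ∈ P,
      ¬ (((P.image (fun x => ∑ i, (x i - p i) ^ 2)).card : ℝ) > (1 - α) * q) →
      α * n ^ 2 ≤ (1 - α) * q * V p := by
    intro p hp hnot
    push_neg at hnot
    have hcs := hCS p hp
    have hSnn : (0:ℝ) ≤ (S p : ℝ) := Nat.cast_nonneg _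
    have e1 : n ^ 2 ≤ (1 - α) * (q:ℝ) * (S p : ℝ) :=
      hcs.trans (mul_le_mul_of_nonneg_right hnot hSnn)
    have hq' : (q:ℝ) ≠ 0 := ne_of_gt hq0
    have expand : (1 - α) * (q:ℝ) * ((S p:ℝ) - n ^ 2 / q)
        = (1 - α) * (q:ℝ) * (S p:ℝ) - (1 - α) * n ^ 2 := by
      field_simp
    rw [hVid p, expand]
    linarith [e1]
  -- total variance bound
  have hVtotal : ∑ p ∈ P, V p ≤ n * (q:ℝ) ^ d := by
    have hsub : ∑ p ∈ P, V p ≤ ∑ p : Fin d → F, V p :=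
      Finset.sum_le_sum_of_subset_of_nonneg (Finset.subset_univ _) (fun p _ _ => hV0 p)
    have hcardP : ((univ : Finset (Fin d → F)).card : ℝ) = (q:ℝ) ^ d := by
      rw [card_univ, Fintype.card_fun, hq, Fintype.card_fin]; push_cast; rfl
    have huniv : ∑ p : Fin d → F, V p
        = (∑ p : Fin d → F, (S p : ℝ)) - (q:ℝ) ^ d * (n ^ 2 / q) := by
      rw [Finset.sum_congr rfl (fun p _ => hVid p), Finset.sum_sub_distrib,
        Finset.sum_const, nsmul_eq_mul, hcardP]
    have hcast : (∑ p : Fin d → F, (S p : ℝ)) * q ≤ n * (q:ℝ) ^ (d + 1) + n ^ 2 * (q:ℝ) ^ d := by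
      rw [hn]
      exact_mod_cast htotal
    have hq' : (q:ℝ) ≠ 0 := ne_of_gt hq0
    refine hsub.trans ?_
    rw [huniv]
    rw [sub_le_iff_le_add]
    rw [← mul_le_mul_iff_of_pos_right hq0]
    calc (∑ p : Fin d → F, (S p : ℝ)) * q ≤ n * (q:ℝ) ^ (d + 1) + n ^ 2 * (q:ℝ) ^ d := hcast
      _ = (n * (q:ℝ) ^ d + (q:ℝ) ^ d * (n ^ 2 / q)) * q := by
        field_simp
        ring
  -- assemble
  have hsplit := Finset.card_filter_add_card_filter_not
    (s := P) (p := fun p => ((P.image (fun x => ∑ i, (x i - p i) ^ 2)).card : ℝ) > (1 - α) * q)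
  set B := P.filter (fun p =>
    ¬ (((P.image (fun x => ∑ i, (x i - p i) ^ 2)).card : ℝ) > (1 - α) * q)) with hB
  have hBbound : (B.card : ℝ) * (α * n ^ 2) ≤ (1 - α) * q * (n * (q:ℝ) ^ d) := by
    calc (B.card : ℝ) * (α * n ^ 2) = ∑ p ∈ B, α * n ^ 2 := by
          rw [Finset.sum_const, nsmul_eq_mul]
      _ ≤ ∑ p ∈ B, (1 - α) * q * V p := Finset.sum_le_sum fun p hp => by
          rw [hB, Finset.mem_filter] at hp
          exact hbad p hp.1 hp.2
      _ = (1 - α) * q * ∑ p ∈ B, V p := by rw [Finset.mul_sum]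
      _ ≤ (1 - α) * q * ∑ p ∈ P, V p := by
          refine mul_le_mul_of_nonneg_left ?_ (by positivity)
          exact Finset.sum_le_sum_of_subset_of_nonneg (Finset.filter_subset _ _)
            (fun p _ _ => hV0 p)
      _ ≤ (1 - α) * q * (n * (q:ℝ) ^ d) := mul_le_mul_of_nonneg_left hVtotal (by positivity)
  have hBle : (B.card : ℝ) ≤ α * n := by
    have h1 : (B.card : ℝ) * (α * n ^ 2) ≤ (α * n) * (α * n ^ 2) := by
      calc (B.card : ℝ) * (α * n ^ 2) ≤ (1 - α) * q * (n * (q:ℝ) ^ d) := hBbound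
        _ = ((1 - α) * (q:ℝ) ^ (d + 1)) * n := by rw [pow_succ]; ring
        _ ≤ (α ^ 2 * n ^ 2) * n := mul_le_mul_of_nonneg_right hkey hP1.le
        _ = (α * n) * (α * n ^ 2) := by ring
    exact le_of_mul_le_mul_right h1 (by positivity)
  have hcount' : ((P.filter (fun p =>
      ((P.image (fun x => ∑ i, (x i - p i) ^ 2)).card : ℝ) > (1 - α) * q)).card : ℝ)
      = n - B.card := by
    rw [hn, ← hsplit]
    push_cast
    ring
  rw [hcount']
  linarith
end

section
/- Let q be an odd prime power and P ⊆ F_q² with |P| ≥ 5q. Then P determines at least 4q³/9 distinct circles, where P determines a circle C if some three points of P lie on C (equivalently, C contains at least 3 points of P). -/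
open Finset



-- number of solutions of a nontrivial linear equation in two variables
lemma beck_line_card {F : Type*} [Field F] [Fintype F] [DecidableEq F]
    {q : ℕ} (hq : Fintype.card F = q) (α β γ : F) (h : α ≠ 0 ∨ β ≠ 0) :
    (univ.filter fun z : F × F => α * z.1 + β * z.2 = γ).card = q := by
  rcases h with hα | hβ
  · have he : (univ.filter fun z : F × F => α * z.1 + β * z.2 = γ)
        = (univ : Finset F).image (fun b => ((γ - β * b) / α, b)) := by
      ext z
      simp only [mem_filter, mem_univ, true_and, mem_image]
      constructor
      · intro hz
        refine ⟨z.2, ?_⟩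
        have h1 : z.1 = (γ - β * z.2) / α := by
          field_simp
          linear_combination hz
        exact Prod.ext h1.symm rfl
      · rintro ⟨b, rfl⟩
        field_simp
        ring
    rw [he, card_image_of_injective _ (fun a b hab => (Prod.ext_iff.mp hab).2), card_univ, hq]
  · have he : (univ.filter fun z : F × F => α * z.1 + β * z.2 = γ)
        = (univ : Finset F).image (fun a => (a, (γ - α * a) / β)) := by
      ext z
      simp only [mem_filter, mem_univ, true_and, mem_image]
      constructor
      · intro hz
        refine ⟨z.1, ?_⟩
        have h1 : z.2 = (γ - α * z.1) / β := by
          field_simp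
          linear_combination hz
        exact Prod.ext rfl h1.symm
      · rintro ⟨a, rfl⟩
        field_simp
        ring
    rw [he, card_image_of_injective _ (fun a b hab => (Prod.ext_iff.mp hab).1), card_univ, hq]

-- each point lies on exactly q^2 circles
lemma beck_point_card {F : Type*} [Field F] [Fintype F] [DecidableEq F]
    {q : ℕ} (hq : Fintype.card F = q) (p : F × F) :
    (univ.filter fun v : F × F × F =>
      (p.1 - v.1) ^ 2 + (p.2 - v.2.1) ^ 2 = v.2.2).card = q ^ 2 := by
  have he : (univ.filter fun v : F × F × F =>
        (p.1 - v.1) ^ 2 + (p.2 - v.2.1) ^ 2 = v.2.2)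
      = (univ : Finset (F × F)).image
          (fun ab => (ab.1, ab.2, (p.1 - ab.1) ^ 2 + (p.2 - ab.2) ^ 2)) := by
    ext v
    simp only [mem_filter, mem_univ, true_and, mem_image]
    constructor
    · intro hv
      exact ⟨(v.1, v.2.1), by simp [hv, Prod.ext_iff]⟩
    · rintro ⟨ab, rfl⟩
      rfl
  rw [he, card_image_of_injective, card_univ, Fintype.card_prod, hq, sq]
  intro a b hab
  simp only [Prod.ext_iff] at hab
  exact Prod.ext hab.1 hab.2.1

-- two distinct points lie on exactly q common circles
lemma beck_pair_card {F : Type*} [Field F] [Fintype F] [DecidableEq F]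
    {q : ℕ} (hq : Fintype.card F = q) (hchar : ringChar F ≠ 2)
    (p p' : F × F) (hne : p ≠ p') :
    (univ.filter fun v : F × F × F =>
      ((p.1 - v.1) ^ 2 + (p.2 - v.2.1) ^ 2 = v.2.2) ∧
      ((p'.1 - v.1) ^ 2 + (p'.2 - v.2.1) ^ 2 = v.2.2)).card = q := by
  have h2 : (2 : F) ≠ 0 := Ring.two_ne_zero hchar
  set α := 2 * (p'.1 - p.1) with hα
  set β := 2 * (p'.2 - p.2) with hβ
  set γ := p'.1 ^ 2 + p'.2 ^ 2 - p.1 ^ 2 - p.2 ^ 2 with hγ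
  have he : (univ.filter fun v : F × F × F =>
        ((p.1 - v.1) ^ 2 + (p.2 - v.2.1) ^ 2 = v.2.2) ∧
        ((p'.1 - v.1) ^ 2 + (p'.2 - v.2.1) ^ 2 = v.2.2))
      = (univ.filter fun z : F × F => α * z.1 + β * z.2 = γ).image
          (fun ab => (ab.1, ab.2, (p.1 - ab.1) ^ 2 + (p.2 - ab.2) ^ 2)) := by
    ext v
    simp only [mem_filter, mem_univ, true_and, mem_image]
    constructor
    · rintro ⟨h1, h2'⟩
      refine ⟨(v.1, v.2.1), ?_, by simp [h1, Prod.ext_iff]⟩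
      rw [hα, hβ, hγ]
      linear_combination h1 - h2'
    · rintro ⟨ab, hab, rfl⟩
      refine ⟨rfl, ?_⟩
      rw [hα, hβ, hγ] at hab
      linear_combination -hab
  rw [he, card_image_of_injective, beck_line_card hq]
  · rcases Prod.ext_iff.not.mp hne with h
    by_cases hx : p.1 = p'.1
    · right
      intro hb
      rcases mul_eq_zero.mp hb with h' | h'
      · exact h2 h'
      · exact hne (Prod.ext hx (sub_eq_zero.mp h').symm)
    · left
      intro ha
      rcases mul_eq_zero.mp ha with h' | h'
      · exact h2 h'
      · exact hx (sub_eq_zero.mp h').symm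
  · intro a b hab
    simp only [Prod.ext_iff] at hab
    exact Prod.ext hab.1 hab.2.1


set_option maxHeartbeats 1000000 in
theorem beck_for_circles {F : Type*} [Field F] [Fintype F] [DecidableEq F]
    {q : ℕ} (hq : Fintype.card F = q) (hchar : ringChar F ≠ 2)
    (P : Finset (F × F)) (hP : P.card ≥ 5 * q) :
    ((Finset.univ.filter (fun t : F × F × F =>
        3 ≤ (P.filter (fun p => (p.1 - t.1) ^ 2 + (p.2 - t.2.1) ^ 2 = t.2.2)).card)).card : ℝ) ≥
      4 * (q : ℝ) ^ 3 / 9 := by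
  classical
  have hq1 : 1 ≤ q := hq ▸ Fintype.card_pos
  set n := P.card with hn
  have hn5 : 5 * q ≤ n := hP
  have hnpos : 0 < n := lt_of_lt_of_le (by omega) hn5
  set S : Finset (F × F × F) := univ.filter (fun v : F × F × F =>
    3 ≤ (P.filter (fun p => (p.1 - v.1) ^ 2 + (p.2 - v.2.1) ^ 2 = v.2.2)).card) with hS
  -- first moment identity
  have E1 : ∑ v : F × F × F,
      (P.filter (fun p => (p.1 - v.1) ^ 2 + (p.2 - v.2.1) ^ 2 = v.2.2)).card = n * q ^ 2 := by
    calc ∑ v : F × F × F,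
        (P.filter (fun p => (p.1 - v.1) ^ 2 + (p.2 - v.2.1) ^ 2 = v.2.2)).card
        = ∑ v : F × F × F, ∑ p ∈ P,
            if (p.1 - v.1) ^ 2 + (p.2 - v.2.1) ^ 2 = v.2.2 then 1 else 0 :=
          Finset.sum_congr rfl fun v _ => Finset.card_filter _ _
      _ = ∑ p ∈ P, ∑ v : F × F × F,
            if (p.1 - v.1) ^ 2 + (p.2 - v.2.1) ^ 2 = v.2.2 then 1 else 0 := Finset.sum_comm
      _ = ∑ p ∈ P, (univ.filter fun v : F × F × F =>
            (p.1 - v.1) ^ 2 + (p.2 - v.2.1) ^ 2 = v.2.2).card :=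
          Finset.sum_congr rfl fun p _ => (Finset.card_filter _ _).symm
      _ = ∑ _p ∈ P, q ^ 2 := Finset.sum_congr rfl fun p _ => beck_point_card hq p
      _ = n * q ^ 2 := by rw [Finset.sum_const, smul_eq_mul]
  -- second moment identity via offDiag
  have Eoff : ∀ v : F × F × F,
      (P.filter (fun p => (p.1 - v.1) ^ 2 + (p.2 - v.2.1) ^ 2 = v.2.2)).offDiag
      = P.offDiag.filter (fun z =>
          ((z.1.1 - v.1) ^ 2 + (z.1.2 - v.2.1) ^ 2 = v.2.2) ∧
          ((z.2.1 - v.1) ^ 2 + (z.2.2 - v.2.1) ^ 2 = v.2.2)) := by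
    intro v
    ext z
    simp only [Finset.mem_offDiag, Finset.mem_filter]
    tauto
  have E2 : ∑ v : F × F × F,
      (P.filter (fun p => (p.1 - v.1) ^ 2 + (p.2 - v.2.1) ^ 2 = v.2.2)).offDiag.card
      = q * (n * n - n) := by
    calc ∑ v : F × F × F,
        (P.filter (fun p => (p.1 - v.1) ^ 2 + (p.2 - v.2.1) ^ 2 = v.2.2)).offDiag.card
        = ∑ v : F × F × F, (P.offDiag.filter (fun z =>
            ((z.1.1 - v.1) ^ 2 + (z.1.2 - v.2.1) ^ 2 = v.2.2) ∧
            ((z.2.1 - v.1) ^ 2 + (z.2.2 - v.2.1) ^ 2 = v.2.2))).card :=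
          Finset.sum_congr rfl fun v _ => by rw [Eoff v]
      _ = ∑ v : F × F × F, ∑ z ∈ P.offDiag,
            if ((z.1.1 - v.1) ^ 2 + (z.1.2 - v.2.1) ^ 2 = v.2.2) ∧
               ((z.2.1 - v.1) ^ 2 + (z.2.2 - v.2.1) ^ 2 = v.2.2) then 1 else 0 :=
          Finset.sum_congr rfl fun v _ => Finset.card_filter _ _
      _ = ∑ z ∈ P.offDiag, ∑ v : F × F × F,
            if ((z.1.1 - v.1) ^ 2 + (z.1.2 - v.2.1) ^ 2 = v.2.2) ∧
               ((z.2.1 - v.1) ^ 2 + (z.2.2 - v.2.1) ^ 2 = v.2.2) then 1 else 0 :=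
          Finset.sum_comm
      _ = ∑ z ∈ P.offDiag, (univ.filter fun v : F × F × F =>
            ((z.1.1 - v.1) ^ 2 + (z.1.2 - v.2.1) ^ 2 = v.2.2) ∧
            ((z.2.1 - v.1) ^ 2 + (z.2.2 - v.2.1) ^ 2 = v.2.2)).card :=
          Finset.sum_congr rfl fun z _ => (Finset.card_filter _ _).symm
      _ = ∑ z ∈ P.offDiag, q := by
          refine Finset.sum_congr rfl fun z hz => ?_
          have hzz := Finset.mem_offDiag.mp hz
          exact beck_pair_card hq hchar z.1 z.2 hzz.2.2
      _ = q * (n * n - n) := by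
          rw [Finset.sum_const, smul_eq_mul, Finset.offDiag_card, mul_comm]
  -- cardinality of the complement of S
  have hcardU : Fintype.card (F × F × F) = q ^ 3 := by
    rw [Fintype.card_prod, Fintype.card_prod, hq]; ring
  set M := (univ.filter (fun v : F × F × F =>
    ¬ 3 ≤ (P.filter (fun p => (p.1 - v.1) ^ 2 + (p.2 - v.2.1) ^ 2 = v.2.2)).card)).card with hM
  have hNM : S.card + M = q ^ 3 := by
    rw [hS, hM, Finset.card_filter_add_card_filter_not, card_univ, hcardU]
  -- natural number quantities
  set AN := ∑ v ∈ S,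
    (P.filter (fun p => (p.1 - v.1) ^ 2 + (p.2 - v.2.1) ^ 2 = v.2.2)).card with hAN
  set BN := ∑ v ∈ S,
    ((P.filter (fun p => (p.1 - v.1) ^ 2 + (p.2 - v.2.1) ^ 2 = v.2.2)).card) ^ 2 with hBN
  -- complement sum bound : n q² ≤ AN + 2 M
  have hsplit : AN + ∑ v ∈ univ.filter (fun v : F × F × F =>
      ¬ 3 ≤ (P.filter (fun p => (p.1 - v.1) ^ 2 + (p.2 - v.2.1) ^ 2 = v.2.2)).card),
      (P.filter (fun p => (p.1 - v.1) ^ 2 + (p.2 - v.2.1) ^ 2 = v.2.2)).card = n * q ^ 2 := by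
    rw [hAN, hS, Finset.sum_filter_add_sum_filter_not, E1]
  have hcompl : ∑ v ∈ univ.filter (fun v : F × F × F =>
      ¬ 3 ≤ (P.filter (fun p => (p.1 - v.1) ^ 2 + (p.2 - v.2.1) ^ 2 = v.2.2)).card),
      (P.filter (fun p => (p.1 - v.1) ^ 2 + (p.2 - v.2.1) ^ 2 = v.2.2)).card ≤ 2 * M := by
    rw [hM, mul_comm]
    refine Finset.sum_le_card_nsmul _ _ 2 fun v hv => ?_
    have := (Finset.mem_filter.mp hv).2
    omega
  have nA : n * q ^ 2 ≤ AN + 2 * M := by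
    calc n * q ^ 2 = AN + _ := hsplit.symm
      _ ≤ AN + 2 * M := Nat.add_le_add_left hcompl AN
  -- second moment bound : BN ≤ q (n² - n) + AN
  have nB : BN ≤ q * (n * n - n) + AN := by
    have hsq : ∀ v ∈ S,
        ((P.filter (fun p => (p.1 - v.1) ^ 2 + (p.2 - v.2.1) ^ 2 = v.2.2)).card) ^ 2
        = (P.filter (fun p =>
            (p.1 - v.1) ^ 2 + (p.2 - v.2.1) ^ 2 = v.2.2)).offDiag.card
          + (P.filter (fun p => (p.1 - v.1) ^ 2 + (p.2 - v.2.1) ^ 2 = v.2.2)).card := by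
      intro v _
      rw [Finset.offDiag_card]
      set m := (P.filter (fun p => (p.1 - v.1) ^ 2 + (p.2 - v.2.1) ^ 2 = v.2.2)).card
      have hmm : m ≤ m * m := by
        rcases Nat.eq_zero_or_pos m with h | h
        · simp [h]
        · exact Nat.le_mul_of_pos_left _ h
      rw [pow_two]
      exact (Nat.sub_add_cancel hmm).symm
    have h1 : BN = (∑ v ∈ S, (P.filter (fun p =>
        (p.1 - v.1) ^ 2 + (p.2 - v.2.1) ^ 2 = v.2.2)).offDiag.card) + AN := by
      rw [hBN, Finset.sum_congr rfl hsq, Finset.sum_add_distrib]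
    have h2 : ∑ v ∈ S, (P.filter (fun p =>
        (p.1 - v.1) ^ 2 + (p.2 - v.2.1) ^ 2 = v.2.2)).offDiag.card ≤ q * (n * n - n) := by
      rw [← E2]
      exact Finset.sum_le_sum_of_subset (Finset.subset_univ S)
    calc BN = _ := h1
      _ ≤ q * (n * n - n) + AN := Nat.add_le_add_right h2 AN
  -- AN ≥ 3 |S|
  have nA3 : 3 * S.card ≤ AN := by
    have := Finset.card_nsmul_le_sum S
      (fun v => (P.filter (fun p => (p.1 - v.1) ^ 2 + (p.2 - v.2.1) ^ 2 = v.2.2)).card)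
      3 (fun v hv => (Finset.mem_filter.mp hv).2)
    simpa [smul_eq_mul, mul_comm] using this
  -- Cauchy-Schwarz over the reals
  have hCS : ((AN : ℝ)) ^ 2 ≤ (S.card : ℝ) * (BN : ℝ) := by
    have := sq_sum_le_card_mul_sum_sq
      (s := S) (f := fun v => ((P.filter (fun p =>
        (p.1 - v.1) ^ 2 + (p.2 - v.2.1) ^ 2 = v.2.2)).card : ℝ))
    rw [hAN, hBN]
    push_cast
    exact this
  -- cast everything to ℝ
  have hle : n ≤ n * n := Nat.le_mul_of_pos_left _ hnpos
  have rNM : (S.card : ℝ) + (M : ℝ) = (q : ℝ) ^ 3 := by exact_mod_cast hNM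
  have rA : (n : ℝ) * (q : ℝ) ^ 2 ≤ (AN : ℝ) + 2 * (M : ℝ) := by exact_mod_cast nA
  have rB : (BN : ℝ) ≤ (q : ℝ) * ((n : ℝ) * (n : ℝ) - (n : ℝ)) + (AN : ℝ) := by
    have := nB
    have h' : ((q * (n * n - n) + AN : ℕ) : ℝ)
        = (q : ℝ) * ((n : ℝ) * (n : ℝ) - (n : ℝ)) + (AN : ℝ) := by
      push_cast [Nat.cast_sub hle]
      ring
    calc (BN : ℝ) ≤ ((q * (n * n - n) + AN : ℕ) : ℝ) := by exact_mod_cast this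
      _ = _ := h'
  have rA3 : 3 * (S.card : ℝ) ≤ (AN : ℝ) := by exact_mod_cast nA3
  have rn : 5 * (q : ℝ) ≤ (n : ℝ) := by exact_mod_cast hn5
  have rq : (1 : ℝ) ≤ (q : ℝ) := by exact_mod_cast hq1
  have rM0 : (0 : ℝ) ≤ (M : ℝ) := by positivity
  have rN0 : (0 : ℝ) ≤ (S.card : ℝ) := by positivity
  -- final algebra
  by_contra hcon
  push_neg at hcon
  have hL : (n : ℝ) * (q : ℝ) ^ 2 - 2 * (q : ℝ) ^ 3 + 2 * (S.card : ℝ) ≤ (AN : ℝ) := by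
    nlinarith [rNM, rA]
  set L : ℝ := (n : ℝ) * (q : ℝ) ^ 2 - 2 * (q : ℝ) ^ 3 + 2 * (S.card : ℝ) with hLdef
  have hLA : L ≤ (AN : ℝ) := hL
  have hLN : (S.card : ℝ) ≤ L + (AN : ℝ) := by nlinarith [rn, rq, rN0, rA3]
  have key : L ^ 2 - (S.card : ℝ) * L ≤ (S.card : ℝ) * ((q : ℝ) * ((n : ℝ) * (n : ℝ) - (n : ℝ))) := by
    nlinarith [hCS, rB, rN0, mul_nonneg (sub_nonneg.2 hLA) (by linarith [hLN] : (0:ℝ) ≤ (AN : ℝ) + L - (S.card : ℝ))]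
  have hw : (0:ℝ) ≤ 4 * (q:ℝ) ^ 3 / 9 - (S.card : ℝ) := le_of_lt (sub_pos.2 hcon)
  have hu : (0:ℝ) ≤ (n:ℝ) - 5 * (q:ℝ) := sub_nonneg.2 rn
  have hq0 : (0:ℝ) ≤ (q:ℝ) := by positivity
  have hq1' : (0:ℝ) ≤ (q:ℝ) - 1 := sub_nonneg.2 rq
  have A1 : (0:ℝ) ≤ ((q:ℝ) - 1) * (q:ℝ) * (((n:ℝ) - 5 * (q:ℝ)) * (4 * (q:ℝ) ^ 3 / 9 - (S.card : ℝ))) :=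
    mul_nonneg (mul_nonneg hq1' hq0) (mul_nonneg hu hw)
  have A2 : (0:ℝ) ≤ ((q:ℝ) - 1) * (q:ℝ) ^ 2 * (4 * (q:ℝ) ^ 3 / 9 - (S.card : ℝ)) :=
    mul_nonneg (mul_nonneg hq1' (by positivity)) hw
  have A3 : (0:ℝ) ≤ (q:ℝ) * ((n:ℝ) - 5 * (q:ℝ)) ^ 2 * (4 * (q:ℝ) ^ 3 / 9 - (S.card : ℝ)) :=
    mul_nonneg (mul_nonneg hq0 (sq_nonneg _)) hw
  have A4 : (0:ℝ) ≤ (q:ℝ) ^ 2 * ((n:ℝ) - 5 * (q:ℝ)) * (4 * (q:ℝ) ^ 3 / 9 - (S.card : ℝ)) :=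
    mul_nonneg (mul_nonneg (by positivity) hu) hw
  have A5 : (0:ℝ) ≤ (q:ℝ) ^ 3 * (4 * (q:ℝ) ^ 3 / 9 - (S.card : ℝ)) :=
    mul_nonneg (by positivity) hw
  have A6 : (0:ℝ) ≤ (q:ℝ) ^ 4 * ((n:ℝ) - 5 * (q:ℝ)) := mul_nonneg (by positivity) hu
  have A7 : (0:ℝ) ≤ (q:ℝ) ^ 4 * ((n:ℝ) - 5 * (q:ℝ)) ^ 2 := mul_nonneg (by positivity) (sq_nonneg _)
  have A8 : (0:ℝ) < (q:ℝ) ^ 5 := by positivity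
  have A9 : (0:ℝ) ≤ (q:ℝ) ^ 5 * ((n:ℝ) - 5 * (q:ℝ)) := mul_nonneg (by positivity) hu
  have A10 : (0:ℝ) ≤ (4 * (q:ℝ) ^ 3 / 9 - (S.card : ℝ)) ^ 2 := sq_nonneg _
  nlinarith [key, A1, A2, A3, A4, A5, A6, A7, A8, A9, A10]
end

section
/- Let q be an odd prime power, P ⊆ F_q² with |P| = 5q, and let 𝒮 be the set of circles in F_q² containing at most 2 points of P (counted as parameter triples (a,b,c) ∈ F_q³). Then |𝒮| < 5q³/9. -/
open Finset

lemma card_line {F : Type*} [Field F] [Fintype F] [DecidableEq F]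
    (a b c : F) (h : a ≠ 0 ∨ b ≠ 0) :
    (univ.filter (fun ab : F × F => a * ab.1 + b * ab.2 = c)).card = Fintype.card F := by
  rcases h with ha | hb
  · rw [← Finset.card_univ]
    refine Finset.card_bij' (fun ab _ => (ab.2 : F)) (fun y _ => (((c - b * y) / a, y) : F × F))
      ?_ ?_ ?_ ?_
    · intro x hx; exact mem_univ _
    · intro y hy
      simp only [mem_filter, mem_univ, true_and]
      field_simp
      ring
    · intro x hx
      simp only [mem_filter, mem_univ, true_and] at hx
      refine Prod.ext ?_ rfl
      field_simp
      linear_combination -hx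
    · intro y hy; rfl
  · rw [← Finset.card_univ]
    refine Finset.card_bij' (fun ab _ => (ab.1 : F)) (fun x _ => ((x, (c - a * x) / b) : F × F))
      ?_ ?_ ?_ ?_
    · intro x hx; exact mem_univ _
    · intro x hx
      simp only [mem_filter, mem_univ, true_and]
      field_simp
      ring
    · intro x hx
      simp only [mem_filter, mem_univ, true_and] at hx
      refine Prod.ext rfl ?_
      field_simp
      linear_combination -hx
    · intro y hy; rfl

lemma count_single {F : Type*} [Field F] [Fintype F] [DecidableEq F] (p : F × F) :
    (univ.filter (fun t : F × F × F =>
      (p.1 - t.1) ^ 2 + (p.2 - t.2.1) ^ 2 = t.2.2)).card = Fintype.card F ^ 2 := by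
  have h : Fintype.card F ^ 2 = (univ : Finset (F × F)).card := by
    rw [Finset.card_univ, Fintype.card_prod, sq]
  rw [h]
  refine Finset.card_bij' (fun t _ => ((t.1, t.2.1) : F × F))
      (fun ab _ => ((ab.1, ab.2, (p.1 - ab.1) ^ 2 + (p.2 - ab.2) ^ 2) : F × F × F))
      ?_ ?_ ?_ ?_
  · intro t ht; exact mem_univ _
  · intro ab hab
    simp only [mem_filter, mem_univ, true_and]
  · intro t ht
    simp only [mem_filter, mem_univ, true_and] at ht
    refine Prod.ext rfl (Prod.ext rfl ?_)
    simp [ht]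
  · intro ab hab; rfl

lemma count_pair {F : Type*} [Field F] [Fintype F] [DecidableEq F]
    (hchar : ringChar F ≠ 2) (p p' : F × F) (hne : p ≠ p') :
    (univ.filter (fun t : F × F × F =>
      (p.1 - t.1) ^ 2 + (p.2 - t.2.1) ^ 2 = t.2.2 ∧
      (p'.1 - t.1) ^ 2 + (p'.2 - t.2.1) ^ 2 = t.2.2)).card = Fintype.card F := by
  have h2 : (2 : F) ≠ 0 := Ring.two_ne_zero hchar
  have hcoef : 2 * (p'.1 - p.1) ≠ 0 ∨ 2 * (p'.2 - p.2) ≠ 0 := by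
    by_contra hc
    push_neg at hc
    have h1 : p'.1 - p.1 = 0 := by
      rcases mul_eq_zero.mp hc.1 with h | h
      · exact absurd h h2
      · exact h
    have h2' : p'.2 - p.2 = 0 := by
      rcases mul_eq_zero.mp hc.2 with h | h
      · exact absurd h h2
      · exact h
    apply hne
    have e1 : p.1 = p'.1 := by linear_combination -h1
    have e2 : p.2 = p'.2 := by linear_combination -h2'
    exact Prod.ext e1 e2
  rw [← card_line (2 * (p'.1 - p.1)) (2 * (p'.2 - p.2))
      (p'.1 ^ 2 + p'.2 ^ 2 - p.1 ^ 2 - p.2 ^ 2) hcoef]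
  refine Finset.card_bij' (fun t _ => ((t.1, t.2.1) : F × F))
      (fun ab _ => ((ab.1, ab.2, (p.1 - ab.1) ^ 2 + (p.2 - ab.2) ^ 2) : F × F × F))
      ?_ ?_ ?_ ?_
  · intro t ht
    simp only [mem_filter, mem_univ, true_and] at ht ⊢
    linear_combination ht.1 - ht.2
  · intro ab hab
    simp only [mem_filter, mem_univ, true_and] at hab ⊢
    linear_combination -hab
  · intro t ht
    simp only [mem_filter, mem_univ, true_and] at ht
    refine Prod.ext rfl (Prod.ext rfl ?_)
    simp [ht.1]
  · intro ab hab; rfl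

theorem few_poor_circles {F : Type*} [Field F] [Fintype F] [DecidableEq F]
    {q : ℕ} (hq : Fintype.card F = q) (hchar : ringChar F ≠ 2)
    (P : Finset (F × F)) (hP : P.card = 5 * q) :
    ((Finset.univ.filter (fun t : F × F × F =>
        (P.filter (fun p => (p.1 - t.1) ^ 2 + (p.2 - t.2.1) ^ 2 = t.2.2)).card ≤ 2)).card : ℝ) <
      5 * (q : ℝ) ^ 3 / 9 := by
  have hq1 : 1 ≤ q := hq ▸ Fintype.card_pos
  set n : F × F × F → ℕ := fun t =>
    (P.filter (fun p => (p.1 - t.1) ^ 2 + (p.2 - t.2.1) ^ 2 = t.2.2)).card with hn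
  -- first moment
  have hA : ∑ t : F × F × F, n t = 5 * q * q ^ 2 := by
    simp only [hn, Finset.card_filter]
    rw [Finset.sum_comm]
    have h : ∀ p ∈ P, (∑ t : F × F × F,
        if (p.1 - t.1) ^ 2 + (p.2 - t.2.1) ^ 2 = t.2.2 then 1 else 0) = q ^ 2 := by
      intro p _
      rw [← Finset.card_filter, count_single, hq]
    rw [Finset.sum_congr rfl h, Finset.sum_const, hP, smul_eq_mul]
  -- second moment
  have hB : ∑ t : F × F × F, n t * n t = 5 * q * q ^ 2 + (5 * q * (5 * q) - 5 * q) * q := by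
    have key : ∀ t : F × F × F, n t * n t =
        ∑ pp ∈ P ×ˢ P,
          (if (pp.1.1 - t.1) ^ 2 + (pp.1.2 - t.2.1) ^ 2 = t.2.2 ∧
              (pp.2.1 - t.1) ^ 2 + (pp.2.2 - t.2.1) ^ 2 = t.2.2 then 1 else 0) := by
      intro t
      calc n t * n t
          = (P.filter (fun p => (p.1 - t.1) ^ 2 + (p.2 - t.2.1) ^ 2 = t.2.2) ×ˢ
             P.filter (fun p => (p.1 - t.1) ^ 2 + (p.2 - t.2.1) ^ 2 = t.2.2)).card := by
            rw [Finset.card_product]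
        _ = ((P ×ˢ P).filter (fun pp : (F × F) × (F × F) =>
              (pp.1.1 - t.1) ^ 2 + (pp.1.2 - t.2.1) ^ 2 = t.2.2 ∧
              (pp.2.1 - t.1) ^ 2 + (pp.2.2 - t.2.1) ^ 2 = t.2.2)).card := by
            congr 1
            ext pp
            simp only [mem_product, mem_filter]
            tauto
        _ = _ := Finset.card_filter _ _
    rw [Finset.sum_congr rfl (fun t _ => key t), Finset.sum_comm]
    rw [(Finset.sum_filter_add_sum_filter_not (P ×ˢ P)
      (fun pp : (F × F) × (F × F) => pp.1 = pp.2)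
      (fun pp : (F × F) × (F × F) => ∑ t : F × F × F,
        if (pp.1.1 - t.1) ^ 2 + (pp.1.2 - t.2.1) ^ 2 = t.2.2 ∧
           (pp.2.1 - t.1) ^ 2 + (pp.2.2 - t.2.1) ^ 2 = t.2.2 then 1 else 0)).symm]
    have hdiag : ((P ×ˢ P).filter (fun pp : (F × F) × (F × F) => pp.1 = pp.2)) = P.diag := by
      ext pp
      simp only [mem_filter, mem_product, Finset.mem_diag]
      constructor
      · rintro ⟨⟨h1, _⟩, h3⟩; exact ⟨h1, h3⟩
      · rintro ⟨h1, h3⟩; exact ⟨⟨h1, h3 ▸ h1⟩, h3⟩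
    have hoff : ((P ×ˢ P).filter (fun pp : (F × F) × (F × F) => ¬ pp.1 = pp.2)) = P.offDiag := by
      ext pp
      simp only [mem_filter, mem_product, Finset.mem_offDiag]
      tauto
    rw [hdiag, hoff]
    have e1 : ∀ pp ∈ P.diag, (∑ t : F × F × F,
        if (pp.1.1 - t.1) ^ 2 + (pp.1.2 - t.2.1) ^ 2 = t.2.2 ∧
           (pp.2.1 - t.1) ^ 2 + (pp.2.2 - t.2.1) ^ 2 = t.2.2 then 1 else 0) = q ^ 2 := by
      intro pp hpp
      rw [Finset.mem_diag] at hpp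
      obtain ⟨hpP, heq⟩ := hpp
      have hset : (univ.filter (fun t : F × F × F =>
          (pp.1.1 - t.1) ^ 2 + (pp.1.2 - t.2.1) ^ 2 = t.2.2 ∧
          (pp.2.1 - t.1) ^ 2 + (pp.2.2 - t.2.1) ^ 2 = t.2.2)) =
          univ.filter (fun t : F × F × F =>
            (pp.1.1 - t.1) ^ 2 + (pp.1.2 - t.2.1) ^ 2 = t.2.2) := by
        ext t
        simp only [mem_filter, mem_univ, true_and, ← heq]
        tauto
      rw [← Finset.card_filter, hset, count_single, hq]
    have e2 : ∀ pp ∈ P.offDiag, (∑ t : F × F × F,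
        if (pp.1.1 - t.1) ^ 2 + (pp.1.2 - t.2.1) ^ 2 = t.2.2 ∧
           (pp.2.1 - t.1) ^ 2 + (pp.2.2 - t.2.1) ^ 2 = t.2.2 then 1 else 0) = q := by
      intro pp hpp
      rw [Finset.mem_offDiag] at hpp
      rw [← Finset.card_filter, count_pair hchar pp.1 pp.2 hpp.2.2, hq]
    rw [Finset.sum_congr rfl e1, Finset.sum_congr rfl e2, Finset.sum_const, Finset.sum_const,
      Finset.diag_card, Finset.offDiag_card, hP, smul_eq_mul, smul_eq_mul]
  -- cast to reals
  have hcast : ((5 * q * (5 * q) - 5 * q : ℕ) : ℝ) = 5 * q * (5 * q) - 5 * q := by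
    have hle : 5 * q ≤ 5 * q * (5 * q) := Nat.le_mul_of_pos_right _ (by positivity)
    push_cast [Nat.cast_sub hle]
    ring
  have hAR : ∑ t : F × F × F, (n t : ℝ) = 5 * q * q ^ 2 := by
    rw [← Nat.cast_sum, hA]; push_cast; ring
  have hBR : ∑ t : F × F × F, (n t : ℝ) ^ 2 =
      5 * q * q ^ 2 + (5 * q * (5 * q) - 5 * q) * q := by
    have h : ∑ t : F × F × F, (n t : ℝ) ^ 2 = ((∑ t : F × F × F, n t * n t : ℕ) : ℝ) := by
      rw [Nat.cast_sum]
      exact Finset.sum_congr rfl (fun t _ => by push_cast; ring)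
    rw [h, hB]
    push_cast [hcast]
    ring
  have hcardT : ((univ : Finset (F × F × F)).card : ℝ) = q ^ 3 := by
    rw [Finset.card_univ, Fintype.card_prod, Fintype.card_prod, hq]
    push_cast; ring
  -- variance
  have hvar : ∑ t : F × F × F, ((n t : ℝ) - 5) ^ 2 = 5 * (q : ℝ) ^ 3 - 5 * q ^ 2 := by
    have expand : ∀ t : F × F × F, ((n t : ℝ) - 5) ^ 2 =
        (n t : ℝ) ^ 2 - 10 * (n t : ℝ) + 25 := fun t => by ring
    rw [Finset.sum_congr rfl (fun t _ => expand t)]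
    rw [Finset.sum_add_distrib, Finset.sum_sub_distrib, ← Finset.mul_sum, hAR, hBR,
      Finset.sum_const, nsmul_eq_mul, hcardT]
    ring
  set S := (Finset.univ.filter (fun t : F × F × F =>
      (P.filter (fun p => (p.1 - t.1) ^ 2 + (p.2 - t.2.1) ^ 2 = t.2.2)).card ≤ 2)) with hS
  have hlb : 9 * (S.card : ℝ) ≤ 5 * (q : ℝ) ^ 3 - 5 * q ^ 2 := by
    have step0 : ∀ t ∈ S, (9 : ℝ) ≤ ((n t : ℝ) - 5) ^ 2 := by
      intro t ht
      rw [hS, Finset.mem_filter] at ht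
      have hn2 : n t ≤ 2 := ht.2
      have h2' : (n t : ℝ) ≤ 2 := by exact_mod_cast hn2
      have h0 : (0 : ℝ) ≤ (n t : ℝ) := Nat.cast_nonneg _
      nlinarith
    have step1 := Finset.card_nsmul_le_sum S _ _ step0
    rw [nsmul_eq_mul] at step1
    have step2 : ∑ t ∈ S, ((n t : ℝ) - 5) ^ 2 ≤ ∑ t : F × F × F, ((n t : ℝ) - 5) ^ 2 := by
      apply Finset.sum_le_sum_of_subset_of_nonneg (Finset.subset_univ S)
      intro t _ _
      positivity
    rw [hvar] at step2
    linarith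
  have hq1R : (1 : ℝ) ≤ q := by exact_mod_cast hq1
  have hq2 : (1 : ℝ) ≤ (q : ℝ) ^ 2 := by nlinarith
  linarith
end

section
/- Let q be an odd prime power and A = {(a₁,…,a_d, a₁²+⋯+a_d²) : aᵢ ∈ F_q} ⊆ F_q^{d+1}. For any finite set C ⊆ F_q^{d+1}, ∑_{x ∈ F_q^{d+1}} (r_{A+C}(x) − |C|/q)² ≤ |C| q^{d-1}(q−1), where r_{A+C}(x) = |{(a,c) ∈ A×C : a+c = x}|. -/
set_option linter.unusedTactic false

open Finset

lemma hyperplane_card_le {F : Type*} [Field F] [Fintype F] [DecidableEq F]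
    {d : ℕ} (w : Fin d → F) (s : F) {j : Fin d} (hj : w j ≠ 0) :
    (univ.filter (fun b : Fin d → F => ∑ i, w i * b i = s)).card ≤ Fintype.card F ^ (d - 1) := by
  classical
  have hcard : Fintype.card {i : Fin d // i ≠ j} = d - 1 := by
    simp [Fintype.card_subtype_compl]
  have h := Finset.card_le_card_of_injOn
    (f := fun (b : Fin d → F) => fun i : {i : Fin d // i ≠ j} => b i.1)
    (s := univ.filter (fun b : Fin d → F => ∑ i, w i * b i = s))
    (t := (univ : Finset ({i : Fin d // i ≠ j} → F)))
    (fun b _ => mem_univ _) ?_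
  · simpa [hcard] using h
  · intro b1 h1 b2 h2 heq
    simp only [mem_coe, mem_filter, mem_univ, true_and] at h1 h2
    have hoff : ∀ i : Fin d, i ≠ j → b1 i = b2 i := fun i hi =>
      congrFun heq ⟨i, hi⟩
    funext i
    by_cases hij : i = j
    · subst hij
      have e1 : w i * b1 i + ∑ k ∈ univ.erase i, w k * b1 k = s :=
        (Finset.add_sum_erase univ (fun k => w k * b1 k) (mem_univ i)).trans h1
      have e2 : w i * b2 i + ∑ k ∈ univ.erase i, w k * b2 k = s :=
        (Finset.add_sum_erase univ (fun k => w k * b2 k) (mem_univ i)).trans h2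
      have hsum : ∑ k ∈ univ.erase i, w k * b1 k = ∑ k ∈ univ.erase i, w k * b2 k := by
        refine Finset.sum_congr rfl fun k hk => ?_
        rw [hoff k (Finset.mem_erase.mp hk).1]
      have : w i * b1 i = w i * b2 i := by
        have h3 := e1.trans e2.symm
        rw [hsum] at h3
        exact add_right_cancel h3
      exact mul_left_cancel₀ hj this
    · exact hoff i hij

theorem paraboloid_energy_bound {F : Type*} [Field F] [Fintype F] [DecidableEq F]
    {q d : ℕ} (hq : Fintype.card F = q) (hchar : ringChar F ≠ 2) (hd : 1 ≤ d)
    (A : Finset (Fin (d + 1) → F))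
    (hA : A = Finset.image (fun a : Fin d → F => Fin.snoc a (∑ i, a i ^ 2)) Finset.univ)
    (C : Finset (Fin (d + 1) → F)) :
    ∑ x : Fin (d + 1) → F,
        ((((A ×ˢ C).filter (fun p => p.1 + p.2 = x)).card : ℝ) - (C.card : ℝ) / q) ^ 2 ≤
      (C.card : ℝ) * (q : ℝ) ^ (d - 1) * ((q : ℝ) - 1) := by
  classical
  have htwo : (2 : F) ≠ 0 := Ring.two_ne_zero hchar
  have hq0 : 0 < q := hq ▸ Fintype.card_pos
  -- membership criterion for A
  have hmemA : ∀ x : Fin (d+1) → F, x ∈ A ↔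
      x (Fin.last d) = ∑ i : Fin d, x (Fin.castSucc i) ^ 2 := by
    intro x
    rw [hA, mem_image]
    constructor
    · rintro ⟨a, -, rfl⟩
      simp
    · intro h
      refine ⟨fun i => x (Fin.castSucc i), mem_univ _, ?_⟩
      rw [← h]
      exact Fin.snoc_init_self x
  have hcardA : A.card = q ^ d := by
    rw [hA, Finset.card_image_of_injective _ ?_, card_univ]
    · simp [hq]
    · intro a b h
      have := congrArg Fin.init h
      simpa [Fin.init_snoc] using this
  -- the representation function
  set r : (Fin (d+1) → F) → ℕ :=
    fun x => ((A ×ˢ C).filter (fun p => p.1 + p.2 = x)).card with hr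
  have hsum_r : ∑ x : Fin (d+1) → F, r x = q ^ d * C.card := by
    rw [← hcardA, ← Finset.card_product]
    exact (Finset.card_eq_sum_card_fiberwise
      (f := fun p : (Fin (d+1) → F) × (Fin (d+1) → F) => p.1 + p.2)
      (t := univ) (fun p _ => mem_univ _)).symm
  -- energy
  set S : Finset (((Fin (d+1) → F) × (Fin (d+1) → F)) × ((Fin (d+1) → F) × (Fin (d+1) → F))) :=
    ((A ×ˢ C) ×ˢ (A ×ˢ C)).filter (fun pp => pp.1.1 + pp.1.2 = pp.2.1 + pp.2.2) with hS
  have hsum_r2 : ∑ x : Fin (d+1) → F, (r x)^2 = S.card := by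
    rw [Finset.card_eq_sum_card_fiberwise
      (f := fun pp : ((Fin (d+1) → F) × (Fin (d+1) → F)) × ((Fin (d+1) → F) × (Fin (d+1) → F))
        => pp.1.1 + pp.1.2)
      (t := univ) (fun p _ => mem_univ _)]
    refine Finset.sum_congr rfl fun x _ => ?_
    have : S.filter (fun pp => pp.1.1 + pp.1.2 = x) =
        ((A ×ˢ C).filter (fun p => p.1 + p.2 = x)) ×ˢ
          ((A ×ˢ C).filter (fun p => p.1 + p.2 = x)) := by
      ext pp
      simp only [hS, mem_filter, mem_product]
      constructor
      · rintro ⟨⟨⟨h1, h2⟩, h3⟩, h4⟩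
        exact ⟨⟨h1, h4⟩, h2, h3 ▸ h4⟩
      · rintro ⟨⟨h1, h4⟩, h2, h5⟩
        exact ⟨⟨⟨h1, h2⟩, h4.trans h5.symm⟩, h4⟩
    rw [this, Finset.card_product, sq]
  -- fiber counts over pairs from C
  set n : ((Fin (d+1) → F) × (Fin (d+1) → F)) → ℕ :=
    fun cc => ((A ×ˢ A).filter (fun aa => aa.1 + cc.1 = aa.2 + cc.2)).card with hn
  have hScard : S.card = ∑ cc ∈ C ×ˢ C, n cc := by
    rw [Finset.card_eq_sum_card_fiberwise
      (f := fun pp : ((Fin (d+1) → F) × (Fin (d+1) → F)) × ((Fin (d+1) → F) × (Fin (d+1) → F))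
        => (pp.1.2, pp.2.2))
      (t := C ×ˢ C) ?_]
    · refine Finset.sum_congr rfl fun cc hcc => ?_
      have hcc' := mem_product.mp hcc
      refine Finset.card_nbij' (i := fun pp => (pp.1.1, pp.2.1))
        (j := fun aa => ((aa.1, cc.1), (aa.2, cc.2))) ?_ ?_ ?_ ?_
      · intro pp hpp
        simp only [Finset.mem_coe, hS, mem_filter, mem_product] at hpp
        obtain ⟨⟨⟨⟨ha1, hc1⟩, ha2, hc2⟩, heq⟩, rfl⟩ := hpp
        exact mem_filter.mpr ⟨mem_product.mpr ⟨ha1, ha2⟩, heq⟩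
      · intro aa haa
        obtain ⟨haa1, heq⟩ := mem_filter.mp haa
        obtain ⟨ha1, ha2⟩ := mem_product.mp haa1
        refine mem_filter.mpr ⟨?_, ?_⟩
        · refine mem_filter.mpr ⟨?_, heq⟩
          exact mem_product.mpr ⟨mem_product.mpr ⟨ha1, hcc'.1⟩, mem_product.mpr ⟨ha2, hcc'.2⟩⟩
        · rfl
      · intro pp hpp
        simp only [Finset.mem_coe, mem_filter] at hpp
        obtain ⟨-, hfib⟩ := hpp
        rw [← hfib]
      · intro aa _
        rfl
    · intro pp hpp
      simp only [Finset.mem_coe, hS, mem_filter, mem_product] at hpp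
      obtain ⟨⟨⟨-, hc1⟩, -, hc2⟩, -⟩ := hpp
      exact mem_product.mpr ⟨hc1, hc2⟩
  -- diagonal count
  have hdiag : ∀ c, n (c, c) = q ^ d := by
    intro c
    rw [hn, ← hcardA]
    refine Finset.card_nbij' (i := fun aa => aa.1) (j := fun a => (a, a)) ?_ ?_ ?_ ?_
    · intro aa haa
      exact (mem_product.mp (mem_filter.mp haa).1).1
    · intro a ha
      exact mem_filter.mpr ⟨mem_product.mpr ⟨ha, ha⟩, rfl⟩
    · intro aa haa
      simp only [Finset.mem_coe, mem_filter] at haa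
      have h2 : aa.1 = aa.2 := add_right_cancel haa.2
      rw [Prod.ext_iff]
      exact ⟨rfl, h2⟩
    · intro a _
      rfl
  -- off-diagonal bound
  have hoff : ∀ cc : ((Fin (d+1) → F) × (Fin (d+1) → F)), cc.1 ≠ cc.2 → n cc ≤ q ^ (d-1) := by
    rintro ⟨c, c'⟩ hne
    simp only at hne
    set v : Fin (d+1) → F := c' - c with hv
    have hvne : v ≠ 0 := sub_ne_zero.mpr (Ne.symm hne)
    set T : Finset (Fin d → F) := univ.filter (fun b : Fin d → F =>
      ∑ i, (2 * v (Fin.castSucc i)) * b i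
        = v (Fin.last d) - ∑ i, v (Fin.castSucc i) ^ 2) with hT
    have step1 : n (c, c') ≤ T.card := by
      show ((A ×ˢ A).filter
        (fun aa : (Fin (d+1) → F) × (Fin (d+1) → F) => aa.1 + c = aa.2 + c')).card ≤ T.card
      apply Finset.card_le_card_of_injOn
        (f := fun aa : (Fin (d+1) → F) × (Fin (d+1) → F) => Fin.init aa.2)
      · intro aa haa
        obtain ⟨hprod, heq⟩ := mem_filter.mp haa
        obtain ⟨ha1, ha2⟩ := mem_product.mp hprod
        have h12 : aa.1 = aa.2 + v := by
          have h' := eq_sub_of_add_eq heq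
          rw [add_sub_assoc] at h'
          exact h'
        have h2 := (hmemA aa.2).mp ha2
        have h1 := (hmemA aa.1).mp ha1
        rw [h12] at h1
        simp only [Pi.add_apply] at h1
        have hexp : ∑ i : Fin d, (aa.2 (Fin.castSucc i) + v (Fin.castSucc i)) ^ 2 =
            ∑ i : Fin d, aa.2 (Fin.castSucc i) ^ 2 +
              (∑ i : Fin d, (2 * v (Fin.castSucc i)) * aa.2 (Fin.castSucc i) +
                ∑ i : Fin d, v (Fin.castSucc i) ^ 2) := by
          rw [← Finset.sum_add_distrib, ← Finset.sum_add_distrib]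
          exact Finset.sum_congr rfl fun i _ => by ring
        rw [hexp] at h1
        refine mem_filter.mpr ⟨mem_univ _, ?_⟩
        show ∑ i : Fin d, (2 * v (Fin.castSucc i)) * aa.2 (Fin.castSucc i)
          = v (Fin.last d) - ∑ i : Fin d, v (Fin.castSucc i) ^ 2
        linear_combination h2 - h1
      · intro aa1 hm1 aa2 hm2 heq'
        simp only [mem_coe, mem_filter] at hm1 hm2
        obtain ⟨hp1, he1⟩ := hm1
        obtain ⟨hp2, he2⟩ := hm2
        obtain ⟨ha11, ha12⟩ := mem_product.mp hp1
        obtain ⟨ha21, ha22⟩ := mem_product.mp hp2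
        have k1 := (hmemA aa1.2).mp ha12
        have k2 := (hmemA aa2.2).mp ha22
        have e2 : aa1.2 = aa2.2 := by
          funext i
          refine Fin.lastCases ?_ ?_ i
          · rw [k1, k2]
            exact Finset.sum_congr rfl fun j _ => by
              rw [show aa1.2 (Fin.castSucc j) = aa2.2 (Fin.castSucc j) from congrFun heq' j]
          · intro j
            exact congrFun heq' j
        have e1 : aa1.1 = aa2.1 := by
          have h12 : aa1.1 = aa1.2 + v := by
            have h' := eq_sub_of_add_eq he1
            rw [add_sub_assoc] at h'
            exact h'
          have h12' : aa2.1 = aa2.2 + v := by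
            have h' := eq_sub_of_add_eq he2
            rw [add_sub_assoc] at h'
            exact h'
          rw [h12, h12', e2]
        rw [Prod.ext_iff]
        exact ⟨e1, e2⟩
    refine step1.trans ?_
    by_cases hm : ∀ i : Fin d, v (Fin.castSucc i) = 0
    · have hvl : v (Fin.last d) ≠ 0 := by
        intro h0
        apply hvne
        funext i
        refine Fin.lastCases ?_ ?_ i
        · exact h0
        · exact hm
      have : T.card = 0 := by
        rw [Finset.card_eq_zero, hT, Finset.filter_eq_empty_iff]
        intro b _
        simp only [hm, mul_zero, zero_mul, Finset.sum_const_zero]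
        intro hcontr
        apply hvl
        simpa using hcontr.symm
      rw [this]
      exact Nat.zero_le _
    · push_neg at hm
      obtain ⟨j, hj⟩ := hm
      have := hyperplane_card_le (fun i => 2 * v (Fin.castSucc i))
        (v (Fin.last d) - ∑ i, v (Fin.castSucc i) ^ 2) (mul_ne_zero htwo hj)
      rw [hq] at this
      exact this
  -- the diagonal of C ×ˢ C
  have hdiagcard : ((C ×ˢ C).filter (fun cc => cc.1 = cc.2)).card = C.card := by
    refine Finset.card_nbij' (i := fun cc => cc.1) (j := fun c => (c, c)) ?_ ?_ ?_ ?_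
    · intro cc hcc
      exact (mem_product.mp (mem_filter.mp hcc).1).1
    · intro c hc
      exact mem_filter.mpr ⟨mem_product.mpr ⟨hc, hc⟩, rfl⟩
    · intro cc hcc
      simp only [Finset.mem_coe, mem_filter] at hcc
      rw [Prod.ext_iff]
      exact ⟨rfl, hcc.2⟩
    · intro c _
      rfl
  -- assembling the energy bound
  have hE : S.card ≤ C.card * q ^ d + (C.card * C.card - C.card) * q ^ (d-1) := by
    rw [hScard, ← Finset.sum_filter_add_sum_filter_not (C ×ˢ C) (fun cc => cc.1 = cc.2)]
    have hpart1 : ∑ cc ∈ (C ×ˢ C).filter (fun cc => cc.1 = cc.2), n cc = C.card * q ^ d := by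
      have hconst : ∀ cc ∈ (C ×ˢ C).filter (fun cc => cc.1 = cc.2), n cc = q ^ d := by
        intro cc hcc
        have h := (mem_filter.mp hcc).2
        have hcc' : cc = (cc.1, cc.1) := by
          rw [Prod.ext_iff]; exact ⟨rfl, h.symm⟩
        rw [hcc']
        exact hdiag cc.1
      rw [Finset.sum_congr rfl hconst, Finset.sum_const, smul_eq_mul, hdiagcard]
    have hpart2 : ∑ cc ∈ (C ×ˢ C).filter (fun cc => ¬ cc.1 = cc.2), n cc ≤
        (C.card * C.card - C.card) * q ^ (d-1) := by
      have hcard2 : ((C ×ˢ C).filter (fun cc => ¬ cc.1 = cc.2)).card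
          = C.card * C.card - C.card := by
        have hh := Finset.card_filter_add_card_filter_not
          (s := C ×ˢ C) (p := fun cc => cc.1 = cc.2)
        rw [hdiagcard, Finset.card_product] at hh
        omega
      calc ∑ cc ∈ (C ×ˢ C).filter (fun cc => ¬ cc.1 = cc.2), n cc
          ≤ ((C ×ˢ C).filter (fun cc => ¬ cc.1 = cc.2)).card * q ^ (d-1) := by
            have := Finset.sum_le_card_nsmul ((C ×ˢ C).filter (fun cc => ¬ cc.1 = cc.2)) n
              (q ^ (d-1)) (fun cc hcc => hoff cc (mem_filter.mp hcc).2)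
            simpa using this
        _ = (C.card * C.card - C.card) * q ^ (d-1) := by rw [hcard2]
    rw [hpart1]
    exact Nat.add_le_add_left hpart2 _
  -- pass to the reals
  have hCC : C.card ≤ C.card * C.card := by
    rcases Nat.eq_zero_or_pos C.card with h | h
    · simp [h]
    · exact Nat.le_mul_of_pos_left _ h
  have hQ : (q : ℝ) ≠ 0 := Nat.cast_ne_zero.mpr hq0.ne'
  have hd1 : d - 1 + 1 = d := Nat.succ_pred_eq_of_pos hd
  have hQd : (q:ℝ) ^ d = (q:ℝ) ^ (d-1) * q := by
    conv_lhs => rw [← hd1]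
    rw [pow_succ]
  have hQd1 : (q:ℝ) ^ (d+1) = (q:ℝ) ^ (d-1) * (q:ℝ)^2 := by
    rw [← pow_add]
    congr 1
    omega
  have hcardV : Fintype.card (Fin (d+1) → F) = q ^ (d+1) := by simp [hq]
  have hsum_rR : ∑ x : Fin (d+1) → F, (r x : ℝ) = (q:ℝ)^d * C.card := by
    rw [← Nat.cast_sum, hsum_r]
    push_cast
    ring
  have hsum_r2R : ∑ x : Fin (d+1) → F, (r x : ℝ)^2 = (S.card : ℝ) := by
    rw [← hsum_r2]
    push_cast
    ring
  have hER : (S.card : ℝ) ≤ (C.card:ℝ) * (q:ℝ)^d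
      + ((C.card:ℝ)*(C.card:ℝ) - (C.card:ℝ)) * (q:ℝ)^(d-1) := by
    have hc := (Nat.cast_le (α := ℝ)).mpr hE
    push_cast [Nat.cast_sub hCC] at hc
    exact hc
  calc ∑ x : Fin (d+1) → F, ((r x : ℝ) - (C.card:ℝ)/q)^2
      = ∑ x : Fin (d+1) → F,
          ((r x:ℝ)^2 - 2*((C.card:ℝ)/q)*(r x:ℝ) + ((C.card:ℝ)/q)^2) := by
        refine Finset.sum_congr rfl fun x _ => by ring
    _ = (S.card : ℝ) - 2*((C.card:ℝ)/q)*((q:ℝ)^d * (C.card:ℝ))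
          + (q:ℝ)^(d+1) * ((C.card:ℝ)/q)^2 := by
        rw [Finset.sum_add_distrib, Finset.sum_sub_distrib, hsum_r2R, ← Finset.mul_sum, hsum_rR,
          Finset.sum_const, Finset.card_univ, hcardV]
        push_cast
        ring
    _ ≤ ((C.card:ℝ) * (q:ℝ)^d + ((C.card:ℝ)*(C.card:ℝ) - (C.card:ℝ)) * (q:ℝ)^(d-1))
          - 2*((C.card:ℝ)/q)*((q:ℝ)^d * (C.card:ℝ)) + (q:ℝ)^(d+1) * ((C.card:ℝ)/q)^2 := by
        linarith [hER]
    _ = (C.card:ℝ) * (q:ℝ)^(d-1) * ((q:ℝ) - 1) := by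
        rw [hQd, hQd1]
        field_simp
        ring
end

section
/- Let q be an odd prime power and P ⊆ F_q^d with |P| > 2(1/2)^{1/2} q^{(d+1)/2} · 2 (i.e., |P| ≥ 2√2 · q^{(d+1)/2} suffices, taking ε = 1/2 in the pinned distance bound). Then there exists a point p ∈ P with |Δ_p(P)| > q/2; in particular the distance set Δ(P) = {‖x−y‖ : x,y ∈ P} has size greater than q/2. -/
open Finset

lemma addChar_map_sum {A M : Type*} [AddCommGroup A] [CommMonoid M] (ψ : AddChar A M)
    {ι : Type*} (s : Finset ι) (f : ι → A) : ψ (∑ i ∈ s, f i) = ∏ i ∈ s, ψ (f i) := by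
  classical
  induction s using Finset.induction with
  | empty => simp
  | insert _ _ h ih => rw [Finset.sum_insert h, Finset.prod_insert h, AddChar.map_add_eq_mul, ih]

lemma pairs_filter_eq {α β : Type*} [DecidableEq α] [DecidableEq β] (P : Finset α) (f : α → β) :
    ((P ×ˢ P).filter (fun xy => f xy.1 = f xy.2))
      = (P.image f).biUnion (fun t => (P.filter fun a => f a = t) ×ˢ (P.filter fun a => f a = t)) := by
  ext ⟨x, y⟩
  simp only [mem_filter, mem_product, mem_biUnion, mem_image]
  constructor
  · rintro ⟨⟨hx, hy⟩, h⟩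
    exact ⟨f x, ⟨x, hx, rfl⟩, by simp [hx, hy, h]⟩
  · rintro ⟨t, _, h⟩
    exact ⟨⟨h.1.1, h.2.1⟩, by rw [h.1.2, h.2.2]⟩

lemma card_pairs_eq {α β : Type*} [DecidableEq α] [DecidableEq β] (P : Finset α) (f : α → β) :
    ((P ×ˢ P).filter (fun xy => f xy.1 = f xy.2)).card
      = ∑ t ∈ P.image f, ((P.filter fun a => f a = t).card)^2 := by
  rw [pairs_filter_eq, Finset.card_biUnion]
  · exact Finset.sum_congr rfl fun t _ => by rw [Finset.card_product, sq]
  · intro t ht t' ht' htt'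
    simp only [Finset.disjoint_left]
    rintro ⟨x, y⟩ h h'
    simp only [mem_product, mem_filter] at h h'
    exact htt' (h.1.2 ▸ h'.1.2)

lemma cs_bound {α β : Type*} [DecidableEq α] [DecidableEq β] (P : Finset α) (f : α → β) :
    (P.card : ℝ)^2 ≤ ((P.image f).card : ℝ)
      * ((((P ×ˢ P).filter (fun xy => f xy.1 = f xy.2)).card : ℝ)) := by
  have h1 : (P.card : ℝ) = ∑ t ∈ P.image f, ((P.filter fun a => f a = t).card : ℝ) := by
    rw [Finset.card_eq_sum_card_image f P]
    push_cast
    rfl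
  have h2 : ((((P ×ˢ P).filter (fun xy => f xy.1 = f xy.2)).card : ℝ))
      = ∑ t ∈ P.image f, ((P.filter fun a => f a = t).card : ℝ)^2 := by
    rw [card_pairs_eq]
    push_cast
    rfl
  rw [h1, h2]
  exact sq_sum_le_card_mul_sum_sq
lemma key_bound {F : Type*} [Field F] [Fintype F] [DecidableEq F] {d : ℕ}
    (hchar : ringChar F ≠ 2) (P : Finset (Fin d → F)) :
    (Fintype.card F : ℝ) * ∑ p ∈ P, (((P ×ˢ P).filter
        (fun xy => (∑ i, (xy.1 i - p i)^2) = (∑ i, (xy.2 i - p i)^2))).card : ℝ)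
      ≤ (P.card:ℝ)^3 + (Fintype.card F:ℝ)^(d+1) * P.card := by
  classical
  set q := Fintype.card F with hq
  set ψ : AddChar F ℂ := AddChar.FiniteField.primitiveChar_to_Complex F with hψdef
  have hψ : ψ.IsPrimitive := AddChar.FiniteField.primitiveChar_to_Complex_isPrimitive F
  have hRchar : 0 < ringChar F := Nat.pos_of_ne_zero (CharP.ringChar_ne_zero_of_finite F)
  have hconj : ∀ t : F, (starRingEnd ℂ) (ψ t) = ψ (-t) := by
    intro t; rw [AddChar.starComp_apply hRchar, AddChar.inv_apply]
  set a : (Fin d → F) → (Fin d → F) → F := fun x p => ∑ i, (x i ^ 2 - 2 * x i * p i) with ha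
  have hcond : ∀ x y p : Fin d → F,
      ((∑ i, (x i - p i)^2) = (∑ i, (y i - p i)^2)) ↔ a x p = a y p := by
    have hrho : ∀ x p : Fin d → F, (∑ i, (x i - p i)^2) = a x p + ∑ i, p i ^ 2 := by
      intro x p
      simp only [ha]
      rw [← Finset.sum_add_distrib]
      exact Finset.sum_congr rfl fun i _ => by ring
    intro x y p; rw [hrho, hrho]; exact add_left_inj _
  set g : F → (Fin d → F) → ℂ := fun s p => ∑ x ∈ P, ψ (s * a x p) with hg
  have hgg : ∀ (s : F) (p : Fin d → F), (Complex.normSq (g s p) : ℂ)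
      = ∑ x ∈ P, ∑ y ∈ P, ψ ((a x p - a y p) * s) := by
    intro s p
    rw [← Complex.mul_conj]
    simp only [hg]
    rw [map_sum (starRingEnd ℂ), Finset.sum_mul_sum]
    refine Finset.sum_congr rfl fun x _ => Finset.sum_congr rfl fun y _ => ?_
    rw [hconj, ← AddChar.map_add_eq_mul]
    congr 1
    ring
  -- claim 1
  have claim1 : ∑ s : F, ∑ p ∈ P, (Complex.normSq (g s p) : ℂ)
      = (q:ℂ) * (∑ p ∈ P, (((P ×ˢ P).filter
        (fun xy => (∑ i, (xy.1 i - p i)^2) = (∑ i, (xy.2 i - p i)^2))).card : ℂ)) := by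
    rw [Finset.sum_comm, Finset.mul_sum]
    refine Finset.sum_congr rfl fun p _ => ?_
    calc ∑ s : F, (Complex.normSq (g s p) : ℂ)
        = ∑ s : F, ∑ x ∈ P, ∑ y ∈ P, ψ ((a x p - a y p) * s) :=
          Finset.sum_congr rfl fun s _ => hgg s p
      _ = ∑ x ∈ P, ∑ y ∈ P, ∑ s : F, ψ ((a x p - a y p) * s) := by
          rw [Finset.sum_comm]
          exact Finset.sum_congr rfl fun x _ => Finset.sum_comm
      _ = ∑ x ∈ P, ∑ y ∈ P, (if (∑ i, (x i - p i)^2) = (∑ i, (y i - p i)^2)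
            then (q:ℂ) else 0) := by
          refine Finset.sum_congr rfl fun x _ => Finset.sum_congr rfl fun y _ => ?_
          have hmc : ∑ s : F, ψ ((a x p - a y p) * s) = ∑ s : F, ψ (s * (a x p - a y p)) :=
            Finset.sum_congr rfl fun s _ => by rw [mul_comm]
          rw [hmc, AddChar.sum_mulShift _ hψ, apply_ite (Nat.cast : ℕ → ℂ), Nat.cast_zero]
          exact if_congr (sub_eq_zero.trans (hcond x y p).symm) (by rw [hq]) rfl
      _ = ∑ xy ∈ P ×ˢ P, (if (∑ i, (xy.1 i - p i)^2) = (∑ i, (xy.2 i - p i)^2)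
            then (q:ℂ) else 0) := by
          rw [Finset.sum_product]
      _ = (q:ℂ) * (((P ×ˢ P).filter
            (fun xy => (∑ i, (xy.1 i - p i)^2) = (∑ i, (xy.2 i - p i)^2))).card : ℂ) := by
          rw [Finset.sum_ite, Finset.sum_const, Finset.sum_const_zero, add_zero, nsmul_eq_mul,
            mul_comm]
  -- claim 2
  have claim2 : ∀ s : F, s ≠ 0 →
      ∑ p : Fin d → F, (Complex.normSq (g s p) : ℂ) = (q:ℂ)^d * P.card := by
    intro s hs
    calc ∑ p : Fin d → F, (Complex.normSq (g s p) : ℂ)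
        = ∑ p : Fin d → F, ∑ x ∈ P, ∑ y ∈ P, ψ ((a x p - a y p) * s) :=
          Finset.sum_congr rfl fun p _ => hgg s p
      _ = ∑ x ∈ P, ∑ y ∈ P, ∑ p : Fin d → F, ψ ((a x p - a y p) * s) := by
          rw [Finset.sum_comm]
          exact Finset.sum_congr rfl fun x _ => Finset.sum_comm
      _ = ∑ x ∈ P, ∑ y ∈ P, (if x = y then (q:ℂ)^d else 0) := by
          refine Finset.sum_congr rfl fun x _ => Finset.sum_congr rfl fun y _ => ?_
          have hsplit : ∀ p : Fin d → F, (a x p - a y p) * s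
              = (∑ i, (x i ^ 2 - y i ^ 2)) * s + ∑ i, (2 * s * (y i - x i)) * p i := by
            intro p
            simp only [ha]
            rw [← Finset.sum_sub_distrib, Finset.sum_mul, Finset.sum_mul,
              ← Finset.sum_add_distrib]
            exact Finset.sum_congr rfl fun i _ => by ring
          have hps : ∑ p : Fin d → F, ∏ i, ψ ((2 * s * (y i - x i)) * p i)
              = ∏ i, ∑ u : F, ψ ((2 * s * (y i - x i)) * u) := by
            rw [← Fintype.piFinset_univ]
            exact (Finset.prod_univ_sum (fun _ => Finset.univ)
              (fun i u => ψ ((2 * s * (y i - x i)) * u))).symm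
          calc ∑ p : Fin d → F, ψ ((a x p - a y p) * s)
              = ∑ p : Fin d → F, (ψ ((∑ i, (x i ^ 2 - y i ^ 2)) * s)
                  * ∏ i, ψ ((2 * s * (y i - x i)) * p i)) := by
                refine Finset.sum_congr rfl fun p _ => ?_
                rw [hsplit p, AddChar.map_add_eq_mul, addChar_map_sum]
            _ = ψ ((∑ i, (x i ^ 2 - y i ^ 2)) * s)
                  * ∏ i, ∑ u : F, ψ ((2 * s * (y i - x i)) * u) := by
                rw [← Finset.mul_sum, hps]
            _ = if x = y then (q:ℂ)^d else 0 := by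
                by_cases hxy : x = y
                · subst hxy
                  rw [if_pos rfl]
                  have hfac : ∀ i : Fin d, ∑ u : F, ψ ((2 * s * (x i - x i)) * u) = (q:ℂ) := by
                    intro i
                    simp only [sub_self, mul_zero, zero_mul, AddChar.map_zero_eq_one,
                      Finset.sum_const, Finset.card_univ, nsmul_eq_mul, mul_one, hq]
                  have hK : (∑ i, (x i ^ 2 - x i ^ 2)) * s = 0 := by simp
                  rw [hK, AddChar.map_zero_eq_one, one_mul,
                    Finset.prod_congr rfl (fun i _ => hfac i), Finset.prod_const,
                    Finset.card_univ, Fintype.card_fin]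
                · rw [if_neg hxy]
                  obtain ⟨i0, hi0⟩ : ∃ i, x i ≠ y i := by
                    by_contra h
                    push_neg at h
                    exact hxy (funext h)
                  have hc : (2 * s * (y i0 - x i0)) ≠ 0 :=
                    mul_ne_zero (mul_ne_zero (Ring.two_ne_zero hchar) hs)
                      (sub_ne_zero.mpr (Ne.symm hi0))
                  have hz : ∑ u : F, ψ ((2 * s * (y i0 - x i0)) * u) = 0 := by
                    have h2 := AddChar.sum_mulShift (ψ := ψ) (2 * s * (y i0 - x i0)) hψ
                    rw [if_neg hc] at h2
                    rw [show (0:ℂ) = ((0:ℕ):ℂ) by norm_num, ← h2]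
                    exact Finset.sum_congr rfl fun u _ => by rw [mul_comm]
                  rw [Finset.prod_eq_zero (Finset.mem_univ i0) hz, mul_zero]
      _ = (q:ℂ)^d * P.card := by
          have h3 : ∀ x ∈ P, (∑ y ∈ P, if x = y then (q:ℂ)^d else 0) = (q:ℂ)^d := by
            intro x hx
            rw [Finset.sum_ite_eq]
            exact if_pos hx
          rw [Finset.sum_congr rfl h3, Finset.sum_const, nsmul_eq_mul, mul_comm]
  -- realify
  have real1 : (q:ℝ) * (∑ p ∈ P, (((P ×ˢ P).filter
        (fun xy => (∑ i, (xy.1 i - p i)^2) = (∑ i, (xy.2 i - p i)^2))).card : ℝ))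
      = ∑ s : F, ∑ p ∈ P, Complex.normSq (g s p) := by
    exact_mod_cast claim1.symm
  have real2 : ∀ s : F, s ≠ 0 →
      ∑ p : Fin d → F, Complex.normSq (g s p) = (q:ℝ)^d * P.card := by
    intro s hs
    exact_mod_cast claim2 s hs
  rw [real1]
  have hsplit0 : ∑ s : F, ∑ p ∈ P, Complex.normSq (g s p)
      = (∑ p ∈ P, Complex.normSq (g 0 p))
        + ∑ s ∈ Finset.univ.erase (0:F), ∑ p ∈ P, Complex.normSq (g s p) :=
    (Finset.add_sum_erase _ _ (Finset.mem_univ 0)).symm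
  rw [hsplit0]
  have hg0 : ∀ p : Fin d → F, g 0 p = (P.card : ℂ) := by
    intro p
    simp only [hg, zero_mul, AddChar.map_zero_eq_one, Finset.sum_const, nsmul_eq_mul, mul_one]
  have hterm0 : ∑ p ∈ P, Complex.normSq (g 0 p) = (P.card:ℝ)^3 := by
    rw [Finset.sum_congr rfl (fun p _ => by rw [hg0 p, Complex.normSq_natCast]),
      Finset.sum_const, nsmul_eq_mul]
    ring
  rw [hterm0]
  have hrest : ∑ s ∈ Finset.univ.erase (0:F), ∑ p ∈ P, Complex.normSq (g s p)
      ≤ (q:ℝ)^(d+1) * P.card := by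
    have hbd : ∀ s ∈ Finset.univ.erase (0:F),
        ∑ p ∈ P, Complex.normSq (g s p) ≤ (q:ℝ)^d * P.card := by
      intro s hs
      have hsub : ∑ p ∈ P, Complex.normSq (g s p)
          ≤ ∑ p : Fin d → F, Complex.normSq (g s p) :=
        Finset.sum_le_sum_of_subset_of_nonneg (Finset.subset_univ P)
          (fun p _ _ => Complex.normSq_nonneg _)
      rw [real2 s (Finset.mem_erase.mp hs).1] at hsub
      exact hsub
    calc ∑ s ∈ Finset.univ.erase (0:F), ∑ p ∈ P, Complex.normSq (g s p)
        ≤ (Finset.univ.erase (0:F)).card • ((q:ℝ)^d * P.card) :=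
          Finset.sum_le_card_nsmul _ _ _ hbd
      _ = ((q - 1 : ℕ) : ℝ) * ((q:ℝ)^d * P.card) := by
          rw [Finset.card_erase_of_mem (Finset.mem_univ 0), Finset.card_univ, nsmul_eq_mul, hq]
      _ ≤ (q:ℝ) * ((q:ℝ)^d * P.card) := by
          have h1 : ((q - 1 : ℕ) : ℝ) ≤ (q:ℝ) := by
            exact_mod_cast Nat.sub_le q 1
          have h2 : (0:ℝ) ≤ (q:ℝ)^d * P.card := by positivity
          exact mul_le_mul_of_nonneg_right h1 h2
      _ = (q:ℝ)^(d+1) * P.card := by ring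
  linarith
theorem large_distance_set {F : Type*} [Field F] [Fintype F] [DecidableEq F]
    {q d : ℕ} (hq : Fintype.card F = q) (hchar : ringChar F ≠ 2) (hd : 1 ≤ d)
    (P : Finset (Fin d → F))
    (hP : (P.card : ℝ) ≥ 2 * Real.sqrt 2 * Real.sqrt ((q : ℝ) ^ (d + 1))) :
    (∃ p ∈ P, ((P.image (fun x => ∑ i, (x i - p i) ^ 2)).card : ℝ) > (q : ℝ) / 2) ∧
      ((((P ×ˢ P).image (fun xy => ∑ i, (xy.1 i - xy.2 i) ^ 2)).card : ℝ) > (q : ℝ) / 2) := by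
  subst hq
  set Q : ℝ := (Fintype.card F : ℝ) with hQdef
  have hQ2 : (2:ℝ) ≤ Q := by
    have h1 := Fintype.one_lt_card (α := F)
    have h2 : (2:ℕ) ≤ Fintype.card F := h1
    rw [hQdef]
    exact_mod_cast h2
  have hKpos : (0:ℝ) < Q^(d+1) := by positivity
  have h8 : 8 * Q^(d+1) ≤ (P.card:ℝ)^2 := by
    have hs2 : Real.sqrt 2 ^ 2 = 2 := Real.sq_sqrt (by norm_num)
    have hsK : Real.sqrt (Q^(d+1)) ^ 2 = Q^(d+1) := Real.sq_sqrt hKpos.le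
    nlinarith [hP, Real.sqrt_nonneg (2:ℝ), Real.sqrt_nonneg (Q^(d+1)),
      mul_nonneg (Real.sqrt_nonneg (2:ℝ)) (Real.sqrt_nonneg (Q^(d+1)))]
  have hcpos : (0:ℝ) < (P.card:ℝ) := by nlinarith
  have hPmem : (0:ℕ) < P.card := by exact_mod_cast hcpos
  have main : ∃ p ∈ P, ((P.image (fun x => ∑ i, (x i - p i) ^ 2)).card : ℝ) > Q / 2 := by
    by_contra hcon
    push_neg at hcon
    have hkey : Q * ∑ p ∈ P, ((((P ×ˢ P).filter
          (fun xy => (∑ i, (xy.1 i - p i)^2) = (∑ i, (xy.2 i - p i)^2))).card : ℝ))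
        ≤ (P.card:ℝ)^3 + Q^(d+1) * P.card := key_bound hchar P
    have hsum : (P.card:ℝ)^3 ≤ (Q/2) * ∑ p ∈ P, ((((P ×ˢ P).filter
          (fun xy => (∑ i, (xy.1 i - p i)^2) = (∑ i, (xy.2 i - p i)^2))).card : ℝ)) := by
      calc (P.card:ℝ)^3 = ∑ _p ∈ P, (P.card:ℝ)^2 := by
            rw [Finset.sum_const, nsmul_eq_mul]; ring
        _ ≤ ∑ p ∈ P, (Q/2) * ((((P ×ˢ P).filter
              (fun xy => (∑ i, (xy.1 i - p i)^2) = (∑ i, (xy.2 i - p i)^2))).card : ℝ)) := by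
            refine Finset.sum_le_sum fun p hp => ?_
            have h1 : (P.card : ℝ)^2 ≤ ((P.image (fun x => ∑ i, (x i - p i)^2)).card : ℝ)
                * ((((P ×ˢ P).filter
                  (fun xy => (∑ i, (xy.1 i - p i)^2) = (∑ i, (xy.2 i - p i)^2))).card : ℝ)) :=
              cs_bound P (fun x => ∑ i, (x i - p i)^2)
            refine h1.trans (mul_le_mul_of_nonneg_right (hcon p hp) (by positivity))
        _ = (Q/2) * ∑ p ∈ P, ((((P ×ˢ P).filter
              (fun xy => (∑ i, (xy.1 i - p i)^2) = (∑ i, (xy.2 i - p i)^2))).card : ℝ)) :=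
            (Finset.mul_sum _ _ _).symm
    nlinarith [mul_le_mul_of_nonneg_right h8 hcpos.le, mul_pos hKpos hcpos]
  obtain ⟨p, hp, hgt⟩ := main
  refine ⟨⟨p, hp, hgt⟩, ?_⟩
  have hsub : P.image (fun x => ∑ i, (x i - p i)^2)
      ⊆ (P ×ˢ P).image (fun xy => ∑ i, (xy.1 i - xy.2 i)^2) := by
    intro t ht
    simp only [Finset.mem_image] at ht ⊢
    obtain ⟨x, hx, rfl⟩ := ht
    exact ⟨(x, p), Finset.mem_product.mpr ⟨hx, hp⟩, rfl⟩
  have hle := Finset.card_le_card hsub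
  have : ((P.image (fun x => ∑ i, (x i - p i)^2)).card : ℝ)
      ≤ (((P ×ˢ P).image (fun xy => ∑ i, (xy.1 i - xy.2 i)^2)).card : ℝ) := by exact_mod_cast hle
  linarith
end
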